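/- arXiv:2603.25554 — 3 statements merged into one kernel-verified Lean document; each statement's English description precedes it below -/
import Mathlib

section
/- For any finite, connected, acyclic quiver Q and any integral weight σ ∈ ℤ^{Q₀}, the dimension of the weight-σ space of semi-invariants for the all-ones dimension vector equals the number of lattice points of the network flow polytope: dim_ℂ SI(Q,𝟏)_σ = |P_σ ∩ ℤ^{Q₁}|. -/
/-- A finite quiver: finite sets of vertices and arrows with tail and head maps. -/
structure FinQuiver where
  V : Type
  A : Type
  [instFinV : Fintype V]
  [instDecV : DecidableEq V]
  [instFinA : Fintype A]
  [instDecA : DecidableEq A]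
  t : A → V
  h : A → V

attribute [instance] FinQuiver.instFinV FinQuiver.instDecV FinQuiver.instFinA FinQuiver.instDecA

/-- Coerce an `ℕ`-valued function (dimension vector) to a `ℤ`-valued one. -/
def natToInt {X : Type} (α : X → ℕ) : X → ℤ := fun x => (α x : ℤ)

namespace FinQuiver

variable (Q : FinQuiver)

/-- `Q` has an oriented cycle. -/
def HasCycle : Prop :=
  ∃ k : ℕ, ∃ c : Fin (k + 1) → Q.A, ∀ i : Fin (k + 1), Q.h (c i) = Q.t (c (i + 1))

/-- `Q` is acyclic: it has no oriented cycles. -/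
def Acyclic : Prop := ¬ Q.HasCycle

/-- Two vertices are adjacent if some arrow joins them (in either direction). -/
def Adj (u v : Q.V) : Prop :=
  ∃ a : Q.A, (Q.t a = u ∧ Q.h a = v) ∨ (Q.t a = v ∧ Q.h a = u)

/-- `Q` is connected as an undirected graph. -/
def Connected : Prop := ∀ u v : Q.V, Relation.ReflTransGen Q.Adj u v

/-- The representation space `rep(Q, β)`. -/
def Rep (β : Q.V → ℕ) : Type :=
  ∀ a : Q.A, Matrix (Fin (β (Q.h a))) (Fin (β (Q.t a))) ℂ

/-- The group `GL(β) = ∏ₓ GL(β(x), ℂ)`. -/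
def GLb (β : Q.V → ℕ) : Type :=
  ∀ x : Q.V, (Matrix (Fin (β x)) (Fin (β x)) ℂ)ˣ

/-- The action of `g⁻¹ ∈ GL(β)` on `W ∈ rep(Q,β)`: `(g⁻¹ · W)ₐ = g_{ha}⁻¹ Wₐ g_{ta}`. -/
noncomputable def invAct {β : Q.V → ℕ} (g : Q.GLb β) (W : Q.Rep β) : Q.Rep β :=
  fun a => ((g (Q.h a))⁻¹).val * W a * (g (Q.t a)).val

/-- `f : rep(Q,β) → ℂ` is a polynomial function of the matrix entries. -/
def IsPolyFun {β : Q.V → ℕ} (f : Q.Rep β → ℂ) : Prop :=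
  ∃ P : MvPolynomial ((a : Q.A) × (Fin (β (Q.h a)) × Fin (β (Q.t a)))) ℂ,
    ∀ W : Q.Rep β, f W = MvPolynomial.eval (fun i => W i.1 i.2.1 i.2.2) P

/-- The character `∏ₓ det(gₓ)^{σ(x)}` of `GL(β)` attached to an integral weight `σ`. -/
noncomputable def detWeight {β : Q.V → ℕ} (σ : Q.V → ℤ) (g : Q.GLb β) : ℂ :=
  ∏ x : Q.V, (Matrix.det (g x).val) ^ (σ x)

/-- The space `SI(Q,β)_σ` of semi-invariants of weight `σ`: polynomial functions `f` on
`rep(Q,β)` with `f(g⁻¹ · W) = (∏ₓ det(gₓ)^{σ(x)}) f(W)` for all `g ∈ GL(β)`. -/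
noncomputable def SIw (β : Q.V → ℕ) (σ : Q.V → ℤ) : Submodule ℂ (Q.Rep β → ℂ) where
  carrier := {f | Q.IsPolyFun f ∧
    ∀ (g : Q.GLb β) (W : Q.Rep β), f (Q.invAct g W) = Q.detWeight σ g * f W}
  add_mem' := by
    rintro f₁ f₂ ⟨⟨P₁, hP₁⟩, h₁⟩ ⟨⟨P₂, hP₂⟩, h₂⟩
    refine ⟨⟨P₁ + P₂, fun W => ?_⟩, fun g W => ?_⟩
    · simp [Pi.add_apply, hP₁ W, hP₂ W]
    · simp only [Pi.add_apply, h₁ g W, h₂ g W]; ring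
  zero_mem' := by
    refine ⟨⟨0, fun W => ?_⟩, fun g W => ?_⟩ <;> simp
  smul_mem' := by
    rintro c f ⟨⟨P, hP⟩, hf⟩
    refine ⟨⟨MvPolynomial.C c * P, fun W => ?_⟩, fun g W => ?_⟩
    · simp [Pi.smul_apply, hP W, smul_eq_mul]
    · simp only [Pi.smul_apply, hf g W, smul_eq_mul]; ring

/-- The dimension of the weight space of semi-invariants `SI(Q,β)_σ`. -/
noncomputable def siDim (β : Q.V → ℕ) (σ : Q.V → ℤ) : ℕ :=
  Module.finrank ℂ (Q.SIw β σ)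

/-- The Euler (Ringel) form of `Q`. -/
def euler (α γ : Q.V → ℤ) : ℤ :=
  (∑ x : Q.V, α x * γ x) - ∑ a : Q.A, α (Q.t a) * γ (Q.h a)

/-- The weight `⟨α, ·⟩ : x ↦ ⟨α, eₓ⟩` attached to a dimension vector `α`. -/
def weightOf (α : Q.V → ℕ) : Q.V → ℤ :=
  fun x => (α x : ℤ) - ∑ a : Q.A, (if Q.h a = x then (α (Q.t a) : ℤ) else 0)

/-- `(α ∘ β)_Q := dim SI(Q,β)_{⟨α,·⟩}`. -/
noncomputable def circ (α β : Q.V → ℕ) : ℕ := Q.siDim β (Q.weightOf α)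

/-- `φ` is a morphism of representations `V → W`. -/
def IsHom {α γ : Q.V → ℕ} (V : Q.Rep α) (W : Q.Rep γ)
    (φ : ∀ x : Q.V, Matrix (Fin (γ x)) (Fin (α x)) ℂ) : Prop :=
  ∀ a : Q.A, φ (Q.h a) * V a = W a * φ (Q.t a)

/-- The space `Hom_Q(V, W)` of morphisms of representations. -/
noncomputable def homSpace {α γ : Q.V → ℕ} (V : Q.Rep α) (W : Q.Rep γ) :
    Submodule ℂ (∀ x : Q.V, Matrix (Fin (γ x)) (Fin (α x)) ℂ) where
  carrier := {φ | Q.IsHom V W φ}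
  add_mem' := by
    intro φ ψ hφ hψ a
    simp only [Pi.add_apply, Matrix.add_mul, Matrix.mul_add, hφ a, hψ a]
  zero_mem' := by
    intro a
    simp
  smul_mem' := by
    intro c φ hφ a
    simp only [Pi.smul_apply, Matrix.smul_mul, Matrix.mul_smul, hφ a]

/-- A representation is Schur if its endomorphism algebra is one-dimensional. -/
def IsSchur {α : Q.V → ℕ} (V : Q.Rep α) : Prop :=
  Module.finrank ℂ (Q.homSpace V V) = 1

/-- A quiver exceptional sequence of dimension vectors. -/
def IsExcSeq {Nn : ℕ} (ε : Fin Nn → (Q.V → ℕ)) : Prop :=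
  (∀ i, Q.euler (natToInt (ε i)) (natToInt (ε i)) = 1 ∧ ∃ V : Q.Rep (ε i), Q.IsSchur V) ∧
  ∀ i j : Fin Nn, i < j →
    Q.euler (natToInt (ε i)) (natToInt (ε j)) ≤ 0 ∧ Q.circ (ε j) (ε i) ≠ 0

/-- The quiver `Q(ℰ)` attached to a sequence `ℰ = (ε₁,…,ε_N)` of dimension vectors:
vertices `1,…,N` and `−⟨εᵢ, εⱼ⟩` arrows from `i` to `j` for `i ≠ j`. -/
def quiverOfSeq {Nn : ℕ} (ε : Fin Nn → (Q.V → ℕ)) : FinQuiver where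
  V := Fin Nn
  A := (i : Fin Nn) × (j : Fin Nn) ×
        Fin (if i = j then 0 else (-(Q.euler (natToInt (ε i)) (natToInt (ε j)))).toNat)
  t := fun a => a.1
  h := fun a => a.2.1

end FinQuiver

/-- An isomorphism of quivers. -/
structure QuiverIso (Q₁ Q₂ : FinQuiver) where
  vEquiv : Q₁.V ≃ Q₂.V
  aEquiv : Q₁.A ≃ Q₂.A
  t_comm : ∀ a : Q₁.A, Q₂.t (aEquiv a) = vEquiv (Q₁.t a)
  h_comm : ∀ a : Q₁.A, Q₂.h (aEquiv a) = vEquiv (Q₁.h a)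

/-- The `p`-complete bipartite quiver `Q^p_{m,n}`: sources `x₁,…,x_m`, sinks `y₁,…,y_n`,
and `p` arrows from each `xᵢ` to each `yⱼ`. -/
def Qpmn (m n p : ℕ) : FinQuiver where
  V := Fin m ⊕ Fin n
  A := Fin m × Fin n × Fin p
  t := fun a => Sum.inl a.1
  h := fun a => Sum.inr a.2.1

/-- The number `T_{a,b}` of 3-way contingency tables of size `m × n × p` with the two
plane-sum margins fixed by `a` and `b`. -/
noncomputable def numTables (m n p : ℕ) (a : Fin m → ℕ) (b : Fin n → ℕ) : ℕ :=
  Nat.card {x : Fin m × Fin n × Fin p → ℕ //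
    (∀ i : Fin m, ∑ j : Fin n, ∑ k : Fin p, x (i, j, k) = a i) ∧
    (∀ j : Fin n, ∑ i : Fin m, ∑ k : Fin p, x (i, j, k) = b j)}

/-- The weight `θ_{a,b}` of `Q^p_{m,n}`. -/
def thetaAB {m n : ℕ} (a : Fin m → ℕ) (b : Fin n → ℕ) : Fin m ⊕ Fin n → ℤ :=
  Sum.elim (fun i => (a i : ℤ)) (fun j => -(b j : ℤ))


namespace SIflow
open FinQuiver MvPolynomial

variable (Q : FinQuiver)

lemma mul11 (M N : Matrix (Fin 1) (Fin 1) ℂ) : (M * N) 0 0 = M 0 0 * N 0 0 := by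
  simp [Matrix.mul_apply]

lemma unit11_mul (u : (Matrix (Fin 1) (Fin 1) ℂ)ˣ) :
    (u.val 0 0) * ((↑u⁻¹ : Matrix (Fin 1) (Fin 1) ℂ) 0 0) = 1 := by
  have h : (u.val * (↑u⁻¹ : Matrix (Fin 1) (Fin 1) ℂ)) 0 0 = (1 : Matrix (Fin 1) (Fin 1) ℂ) 0 0 := by
    rw [Units.mul_inv]
  rw [mul11] at h
  simpa using h

lemma unit11_ne (u : (Matrix (Fin 1) (Fin 1) ℂ)ˣ) : u.val 0 0 ≠ 0 :=
  left_ne_zero_of_mul_eq_one (unit11_mul u)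

lemma unit11_inv (u : (Matrix (Fin 1) (Fin 1) ℂ)ˣ) :
    (↑u⁻¹ : Matrix (Fin 1) (Fin 1) ℂ) 0 0 = (u.val 0 0)⁻¹ :=
  (inv_eq_of_mul_eq_one_right (unit11_mul u)).symm

def unitOf (u : ℂˣ) : (Matrix (Fin 1) (Fin 1) ℂ)ˣ where
  val := Matrix.of fun _ _ => (u : ℂ)
  inv := Matrix.of fun _ _ => ((u⁻¹ : ℂˣ) : ℂ)
  val_inv := by
    ext i j
    have : i = j := Subsingleton.elim i j
    subst this
    simp [Matrix.mul_apply, Matrix.one_apply]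
  inv_val := by
    ext i j
    have : i = j := Subsingleton.elim i j
    subst this
    simp [Matrix.mul_apply, Matrix.one_apply]

def gOf (c : Q.V → ℂˣ) : Q.GLb (fun _ => 1) := fun v => unitOf (c v)

lemma invAct_entry (g : Q.GLb (fun _ => 1)) (W : Q.Rep (fun _ => 1)) (a : Q.A) :
    (Q.invAct g W) a 0 0 = ((g (Q.h a)).val 0 0)⁻¹ * W a 0 0 * (g (Q.t a)).val 0 0 := by
  show ((((g (Q.h a))⁻¹ : _).val * W a : Matrix (Fin 1) (Fin 1) ℂ) * (g (Q.t a)).val) 0 0 = _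
  rw [mul11, mul11, unit11_inv]

lemma detWeight_eq (σ : Q.V → ℤ) (g : Q.GLb (fun _ => 1)) :
    Q.detWeight σ g = ∏ v : Q.V, ((g v).val 0 0) ^ σ v := by
  unfold FinQuiver.detWeight
  refine Finset.prod_congr rfl fun v _ => ?_
  rw [Matrix.det_fin_one]

def divg (m : Q.A → ℕ) (v : Q.V) : ℤ :=
  ((∑ a : Q.A, if Q.t a = v then m a else 0 : ℕ) : ℤ) -
  ((∑ a : Q.A, if Q.h a = v then m a else 0 : ℕ) : ℤ)

def pack (w : Q.A → ℂ) : Q.Rep (fun _ => 1) :=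
  fun a => Matrix.of fun _ _ => w a

def wOf (W : Q.Rep (fun _ => 1)) : Q.A → ℂ := fun a => W a 0 0

lemma pack_wOf (W : Q.Rep (fun _ => 1)) : pack Q (wOf Q W) = W := by
  funext a
  ext i j
  have hi : i = 0 := Subsingleton.elim i 0
  have hj : j = 0 := Subsingleton.elim j 0
  subst hi hj
  rfl

def mon (m : Q.A → ℕ) : Q.Rep (fun _ => 1) → ℂ :=
  fun W => ∏ a : Q.A, (W a 0 0) ^ (m a)

lemma mon_pack (m : Q.A → ℕ) (w : Q.A → ℂ) : mon Q m (pack Q w) = ∏ a : Q.A, w a ^ m a := rfl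

lemma prod_sel (c : Q.V → ℂ) (m : Q.A → ℕ) (sel : Q.A → Q.V) :
    ∏ v : Q.V, c v ^ (∑ a : Q.A, if sel a = v then m a else 0)
      = ∏ a : Q.A, c (sel a) ^ m a := by
  have h : ∀ v, c v ^ (∑ a : Q.A, if sel a = v then m a else 0)
      = ∏ a : Q.A, (if sel a = v then c v ^ m a else 1) := by
    intro v
    rw [← Finset.prod_pow_eq_pow_sum]
    exact Finset.prod_congr rfl fun a _ => by split <;> simp
  simp_rw [h]
  rw [Finset.prod_comm]
  refine Finset.prod_congr rfl fun a _ => ?_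
  rw [Finset.prod_eq_single (sel a)]
  · simp
  · intro v _ hv
    simp [Ne.symm hv]
  · simp

lemma prod_zpow_divg (c : Q.V → ℂ) (hc : ∀ v, c v ≠ 0) (m : Q.A → ℕ) :
    ∏ v : Q.V, c v ^ divg Q m v
      = (∏ a : Q.A, (c (Q.t a)) ^ m a) / ∏ a : Q.A, (c (Q.h a)) ^ m a := by
  unfold divg
  rw [Finset.prod_congr rfl (fun v _ => zpow_sub₀ (hc v) _ _)]
  simp_rw [zpow_natCast]
  rw [Finset.prod_div_distrib, prod_sel, prod_sel]

end SIflow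

namespace SIflow
open FinQuiver MvPolynomial

variable (Q : FinQuiver)

noncomputable def chi (d : Q.V → ℤ) : (Q.V → ℂˣ) →* ℂ where
  toFun c := ∏ v : Q.V, ((c v : ℂ)) ^ d v
  map_one' := by simp
  map_mul' x y := by
    simp only [Pi.mul_apply, Units.val_mul, mul_zpow]
    rw [Finset.prod_mul_distrib]

lemma chi_inj : Function.Injective (chi Q) := by
  intro d d' hdd
  funext v
  have h2 : (2 : ℂ) ≠ 0 := two_ne_zero
  have key : ∀ e : Q.V → ℤ, chi Q e (fun u => if u = v then Units.mk0 (2:ℂ) h2 else 1)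
      = (2 : ℂ) ^ e v := by
    intro e
    show (∏ u : Q.V, ((if u = v then Units.mk0 (2:ℂ) h2 else 1 : ℂˣ) : ℂ) ^ e u) = _
    rw [Finset.prod_eq_single v]
    · simp
    · intro u _ hu
      simp [hu]
    · simp
  have h : (2:ℂ) ^ d v = (2:ℂ) ^ d' v := by
    rw [← key d, ← key d', hdd]
  -- (2:ℂ)^d v = (2:ℂ)^d' v implies d v = d' v
  have hr : ((2:ℝ) ^ d v : ℝ) = ((2:ℝ) ^ d' v : ℝ) := by
    have : (((2:ℝ) ^ d v : ℝ) : ℂ) = (((2:ℝ) ^ d' v : ℝ) : ℂ) := by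
      rw [Complex.ofReal_zpow, Complex.ofReal_zpow]
      push_cast
      exact h
    exact_mod_cast this
  exact zpow_right_injective₀ (by norm_num : (0:ℝ) < 2) (by norm_num) hr

lemma mon_isPoly (m : Q.A → ℕ) : Q.IsPolyFun (mon Q m) := by
  refine ⟨∏ a : Q.A, (X ⟨a, 0, 0⟩ : MvPolynomial ((a : Q.A) × (Fin 1 × Fin 1)) ℂ) ^ m a,
    fun W => ?_⟩
  rw [map_prod]
  simp only [map_pow, eval_X]
  rfl

lemma mon_semiinv (σ : Q.V → ℤ) (m : Q.A → ℕ) (hm : ∀ v, divg Q m v = σ v)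
    (g : Q.GLb (fun _ => 1)) (W : Q.Rep (fun _ => 1)) :
    mon Q m (Q.invAct g W) = Q.detWeight σ g * mon Q m W := by
  set c : Q.V → ℂ := fun v => (g v).val 0 0 with hc
  have hcne : ∀ v, c v ≠ 0 := fun v => unit11_ne _
  have h1 : mon Q m (Q.invAct g W) = (∏ a : Q.A, ((c (Q.h a))⁻¹ * W a 0 0 * c (Q.t a)) ^ m a) := by
    unfold mon
    refine Finset.prod_congr rfl fun a _ => ?_
    rw [invAct_entry]
  rw [h1, detWeight_eq]
  have h2 : ∀ v, c v ^ σ v = c v ^ divg Q m v := fun v => by rw [hm v]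
  rw [Finset.prod_congr rfl fun v _ => h2 v, prod_zpow_divg Q c hcne]
  simp only [mul_pow, inv_pow]
  rw [Finset.prod_mul_distrib, Finset.prod_mul_distrib]
  unfold mon
  field_simp
  rw [Finset.prod_congr rfl (fun x _ => one_div (c (Q.h x) ^ m x)), Finset.prod_inv_distrib]
  ring

lemma mon_mem (σ : Q.V → ℤ) (m : Q.A → ℕ) (hm : ∀ v, divg Q m v = σ v) :
    mon Q m ∈ Q.SIw (fun _ => 1) σ :=
  ⟨mon_isPoly Q m, mon_semiinv Q σ m hm⟩

end SIflow
namespace SIflow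
open FinQuiver MvPolynomial

variable (Q : FinQuiver)

noncomputable def famT (σ : Q.V → ℤ) :
    ({m : Q.A → ℕ // ∀ v, divg Q m v = σ v} →₀ ℂ) →ₗ[ℂ] (Q.Rep (fun _ => 1) → ℂ) :=
  Finsupp.linearCombination ℂ (fun s => mon Q s.1)

lemma famT_apply (σ : Q.V → ℤ) (l) (W : Q.Rep (fun _ => 1)) :
    famT Q σ l W = ∑ s ∈ l.support, l s * mon Q s.1 W := by
  unfold famT
  rw [Finsupp.linearCombination_apply, Finsupp.sum]
  rw [Finset.sum_apply]
  rfl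

lemma famT_inj (σ : Q.V → ℤ) : Function.Injective (famT Q σ) := by
  rw [← LinearMap.ker_eq_bot, LinearMap.ker_eq_bot']
  intro l hl
  set E : {m : Q.A → ℕ // ∀ v, divg Q m v = σ v} → (Q.A →₀ ℕ) :=
    fun s => Finsupp.equivFunOnFinite.symm s.1 with hE
  have hEinj : Function.Injective E := by
    intro s s' hss
    apply Subtype.ext
    have := Finsupp.equivFunOnFinite.symm.injective hss
    exact this
  set PL : MvPolynomial Q.A ℂ := ∑ s ∈ l.support, monomial (E s) (l s) with hPL
  have hev : ∀ w : Q.A → ℂ, MvPolynomial.eval w PL = 0 := by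
    intro w
    rw [hPL, map_sum]
    have hterm : ∀ s ∈ l.support, MvPolynomial.eval w (monomial (E s) (l s))
        = l s * mon Q s.1 (pack Q w) := by
      intro s _
      rw [eval_monomial]
      congr 1
      rw [Finsupp.prod_fintype]
      · rw [mon_pack]
        rfl
      · intro a
        simp
    rw [Finset.sum_congr rfl hterm, ← famT_apply, hl]
    rfl
  have hPL0 : PL = 0 := by
    apply MvPolynomial.funext
    intro x
    rw [hev x, map_zero]
  ext s₀
  have : MvPolynomial.coeff (E s₀) PL = l s₀ := by
    rw [hPL]
    rw [MvPolynomial.coeff_sum]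
    simp only [coeff_monomial]
    rw [Finset.sum_eq_single s₀]
    · simp
    · intro s _ hs
      rw [if_neg]
      exact fun hEq => hs (hEinj hEq)
    · intro hs₀
      rw [if_pos rfl]
      exact (Finsupp.notMem_support_iff.mp hs₀)
  rw [← this, hPL0, MvPolynomial.coeff_zero]
  rfl

end SIflow
namespace SIflow
open FinQuiver MvPolynomial

variable (Q : FinQuiver)

lemma scaled_prod (c : Q.V → ℂˣ) (w : Q.A → ℂ) (m : Q.A → ℕ) :
    ∏ a : Q.A, (((c (Q.h a) : ℂ))⁻¹ * w a * (c (Q.t a) : ℂ)) ^ m a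
      = chi Q (divg Q m) c * ∏ a : Q.A, w a ^ m a := by
  have hne : ∀ v, ((c v : ℂ)) ≠ 0 := fun v => Units.ne_zero _
  show _ = (∏ v : Q.V, ((c v : ℂ)) ^ divg Q m v) * _
  rw [prod_zpow_divg Q _ hne]
  simp only [mul_pow, inv_pow]
  rw [Finset.prod_mul_distrib, Finset.prod_mul_distrib, Finset.prod_inv_distrib,
    div_eq_mul_inv]
  ring

lemma poly_of_SIw (σ : Q.V → ℤ) (f : Q.Rep (fun _ => 1) → ℂ)
    (hf : f ∈ Q.SIw (fun _ => 1) σ) :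
    ∃ P : MvPolynomial Q.A ℂ,
      (∀ W, f W = MvPolynomial.eval (wOf Q W) P) ∧
      (∀ (c : Q.V → ℂˣ) (w : Q.A → ℂ),
        MvPolynomial.eval (fun a => ((c (Q.h a) : ℂ))⁻¹ * w a * (c (Q.t a) : ℂ)) P
          = (∏ v : Q.V, ((c v : ℂ)) ^ σ v) * MvPolynomial.eval w P) := by
  obtain ⟨⟨P0, hP0⟩, heq⟩ := hf
  set P : MvPolynomial Q.A ℂ := rename Sigma.fst P0 with hPdef
  have hev : ∀ W, f W = MvPolynomial.eval (wOf Q W) P := by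
    intro W
    rw [hPdef, eval_rename, hP0 W]
    have hpt : (wOf Q W ∘ Sigma.fst) = (fun i : (a : Q.A) × (Fin ((fun _ => (1:ℕ)) (Q.h a)) × Fin ((fun _ => (1:ℕ)) (Q.t a))) => W i.fst i.snd.1 i.snd.2) := by
      funext i
      show wOf Q W i.1 = W i.1 i.2.1 i.2.2
      have h1 : i.2.1 = 0 := Subsingleton.elim _ _
      have h2 : i.2.2 = 0 := Subsingleton.elim _ _
      rw [h1, h2]
      rfl
    rw [hpt]
  refine ⟨P, hev, fun c w => ?_⟩
  have hfp : ∀ u : Q.A → ℂ, f (pack Q u) = MvPolynomial.eval u P := fun u => hev (pack Q u)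
  have hWact : Q.invAct (gOf Q c) (pack Q w)
      = pack Q (fun a => ((c (Q.h a) : ℂ))⁻¹ * w a * (c (Q.t a) : ℂ)) := by
    funext a
    ext i j
    have hi : i = 0 := Subsingleton.elim _ _
    have hj : j = 0 := Subsingleton.elim _ _
    subst hi hj
    rw [invAct_entry]
    rfl
  have hdw : Q.detWeight σ (gOf Q c) = ∏ v : Q.V, ((c v : ℂ)) ^ σ v := by
    rw [detWeight_eq]
    rfl
  have hgw := heq (gOf Q c) (pack Q w)
  rw [hWact, hfp, hfp, hdw] at hgw
  exact hgw

lemma filter_eval (σ : Q.V → ℤ) (P : MvPolynomial Q.A ℂ)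
    (hP : ∀ (c : Q.V → ℂˣ) (w : Q.A → ℂ),
        MvPolynomial.eval (fun a => ((c (Q.h a) : ℂ))⁻¹ * w a * (c (Q.t a) : ℂ)) P
          = (∏ v : Q.V, ((c v : ℂ)) ^ σ v) * MvPolynomial.eval w P)
    (w : Q.A → ℂ) :
    MvPolynomial.eval w P = ∑ m ∈ P.support.filter (fun (m : Q.A →₀ ℕ) => divg Q ⇑m = σ),
      coeff m P * ∏ a : Q.A, w a ^ m a := by
  classical
  set D : Finset (Q.V → ℤ) := insert σ (P.support.image fun (m : Q.A →₀ ℕ) => divg Q ⇑m) with hD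
  set G : (Q.V → ℤ) → ℂ := fun d =>
    (∑ m ∈ P.support.filter (fun (m : Q.A →₀ ℕ) => divg Q ⇑m = d), coeff m P * ∏ a : Q.A, w a ^ m a)
      - (if d = σ then MvPolynomial.eval w P else 0) with hG
  have hLI : LinearIndependent ℂ (fun d : Q.V → ℤ => ((chi Q d : (Q.V → ℂˣ) → ℂ))) :=
    (linearIndependent_monoidHom (Q.V → ℂˣ) ℂ).comp (chi Q) (chi_inj Q)
  have hrel : ∑ d ∈ D, G d • (fun c => chi Q d c) = (0 : (Q.V → ℂˣ) → ℂ) := by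
    funext c
    rw [Finset.sum_apply]
    simp only [Pi.smul_apply, smul_eq_mul, Pi.zero_apply]
    have hsplit : ∑ d ∈ D, G d * chi Q d c
        = (∑ d ∈ D, (∑ m ∈ P.support.filter (fun (m : Q.A →₀ ℕ) => divg Q ⇑m = d),
             coeff m P * ∏ a : Q.A, w a ^ m a) * chi Q d c)
          - (∑ d ∈ D, (if d = σ then MvPolynomial.eval w P else 0) * chi Q d c) := by
      rw [← Finset.sum_sub_distrib]
      refine Finset.sum_congr rfl fun d _ => ?_
      rw [hG]
      ring
    have h1 : ∑ d ∈ D, (∑ m ∈ P.support.filter (fun (m : Q.A →₀ ℕ) => divg Q ⇑m = d),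
          coeff m P * ∏ a : Q.A, w a ^ m a) * chi Q d c
        = ∑ m ∈ P.support, coeff m P * (∏ a : Q.A, w a ^ m a) * chi Q (divg Q ⇑m) c := by
      rw [← Finset.sum_fiberwise_of_maps_to (g := fun (m : Q.A →₀ ℕ) => divg Q ⇑m) (t := D)
            (fun m hm => Finset.mem_insert_of_mem (Finset.mem_image_of_mem _ hm))
            (fun m => coeff m P * (∏ a : Q.A, w a ^ m a) * chi Q (divg Q ⇑m) c)]
      refine Finset.sum_congr rfl fun d _ => ?_
      rw [Finset.sum_mul]
      refine Finset.sum_congr rfl fun m hm => ?_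
      rw [(Finset.mem_filter.mp hm).2]
    have h2 : ∑ d ∈ D, (if d = σ then MvPolynomial.eval w P else 0) * chi Q d c
        = MvPolynomial.eval w P * chi Q σ c := by
      rw [Finset.sum_eq_single σ]
      · rw [if_pos rfl]
      · intro d _ hd
        rw [if_neg hd, zero_mul]
      · intro hσ
        exact absurd (Finset.mem_insert_self σ _) hσ
    have hkey : ∑ m ∈ P.support, coeff m P * (∏ a : Q.A, w a ^ m a) * chi Q (divg Q ⇑m) c
        = MvPolynomial.eval w P * chi Q σ c := by
      have hPcw := hP c w
      rw [eval_eq' (fun a => ((c (Q.h a) : ℂ))⁻¹ * w a * (c (Q.t a) : ℂ)) P] at hPcw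
      calc ∑ m ∈ P.support, coeff m P * (∏ a : Q.A, w a ^ m a) * chi Q (divg Q ⇑m) c
          = ∑ m ∈ P.support, coeff m P
              * ∏ a : Q.A, (((c (Q.h a) : ℂ))⁻¹ * w a * (c (Q.t a) : ℂ)) ^ m a := by
            refine Finset.sum_congr rfl fun m _ => ?_
            rw [scaled_prod]
            ring
        _ = (∏ v : Q.V, ((c v : ℂ)) ^ σ v) * MvPolynomial.eval w P := hPcw
        _ = MvPolynomial.eval w P * chi Q σ c := by
            show _ = MvPolynomial.eval w P * ∏ v : Q.V, ((c v : ℂ)) ^ σ v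
            ring
    rw [hsplit, h1, h2, hkey, sub_self]
  have hGσ := (linearIndependent_iff'.mp hLI) D G hrel σ (Finset.mem_insert_self σ _)
  simp only [hG, if_pos rfl] at hGσ
  exact (sub_eq_zero.mp hGσ).symm

end SIflow
namespace SIflow
open FinQuiver MvPolynomial

variable (Q : FinQuiver)

lemma SIw_mem_range (σ : Q.V → ℤ) (f : Q.Rep (fun _ => 1) → ℂ)
    (hf : f ∈ Q.SIw (fun _ => 1) σ) : f ∈ LinearMap.range (famT Q σ) := by
  classical
  obtain ⟨P, hev, hP⟩ := poly_of_SIw Q σ f hf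
  set F := P.support.filter (fun (m : Q.A →₀ ℕ) => divg Q ⇑m = σ) with hF
  refine ⟨∑ m ∈ F.attach, Finsupp.single
    ⟨(⇑m.1 : Q.A → ℕ), fun v => congrFun (Finset.mem_filter.mp m.2).2 v⟩ (coeff m.1 P), ?_⟩
  funext W
  have hfW : f W = ∑ m ∈ F, coeff m P * mon Q (⇑m) W := by
    rw [hev W, filter_eval Q σ P hP (wOf Q W)]
    rfl
  rw [map_sum, Finset.sum_apply, hfW,
    ← Finset.sum_attach F (fun m => coeff m P * mon Q (⇑m) W)]
  refine Finset.sum_congr rfl fun m _ => ?_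
  show (famT Q σ) (Finsupp.single _ _) W = _
  unfold famT
  rw [Finsupp.linearCombination_single]
  rfl

lemma siDim_eq_card (σ : Q.V → ℤ) :
    Q.siDim (fun _ => 1) σ = Nat.card {m : Q.A → ℕ // ∀ v, divg Q m v = σ v} := by
  have hrange : LinearMap.range (famT Q σ) = Q.SIw (fun _ => 1) σ := by
    apply le_antisymm
    · rw [famT, Finsupp.range_linearCombination, Submodule.span_le]
      rintro _ ⟨s, rfl⟩
      exact mon_mem Q σ s.1 s.2
    · intro f hf
      exact SIw_mem_range Q σ f hf
  have e1 := LinearEquiv.ofInjective (famT Q σ) (famT_inj Q σ)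
  have e2 : (LinearMap.range (famT Q σ)) ≃ₗ[ℂ] (Q.SIw (fun _ => 1) σ) :=
    LinearEquiv.ofEq _ _ hrange
  have e3 := e1.trans e2
  show Module.finrank ℂ (Q.SIw (fun _ => 1) σ) = _
  rw [← e3.finrank_eq]
  show (Module.rank ℂ _).toNat = _
  rw [rank_finsupp_self']
  rfl

end SIflow
namespace SIflow
open FinQuiver

variable (Q : FinQuiver)

lemma divg_cast (m : Q.A → ℕ) (v : Q.V) (z : ℤ) :
    divg Q m v = z ↔
      ((∑ a : Q.A, if Q.t a = v then (m a : ℝ) else 0)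
        - ∑ a : Q.A, if Q.h a = v then (m a : ℝ) else 0) = (z : ℝ) := by
  have hcast : ((divg Q m v : ℤ) : ℝ)
      = (∑ a : Q.A, if Q.t a = v then (m a : ℝ) else 0)
        - ∑ a : Q.A, if Q.h a = v then (m a : ℝ) else 0 := by
    unfold divg
    push_cast
    rfl
  constructor
  · intro h
    rw [← hcast, h]
  · intro h
    have : ((divg Q m v : ℤ) : ℝ) = (z : ℝ) := hcast.trans h
    exact_mod_cast this


def toL (σ : Q.V → ℤ) (m : {m : Q.A → ℕ // ∀ v, divg Q m v = σ v}) :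
    {x : Q.A → ℝ //
        ((∀ a : Q.A, 0 ≤ x a) ∧
          ∀ v : Q.V,
            ((∑ a : Q.A, if Q.t a = v then x a else 0) -
              ∑ a : Q.A, if Q.h a = v then x a else 0) = (σ v : ℝ)) ∧
        ∀ a : Q.A, ∃ k : ℤ, x a = (k : ℝ)} :=
  ⟨fun a => (m.1 a : ℝ),
    ⟨⟨fun a => Nat.cast_nonneg _, fun v => (divg_cast Q m.1 v (σ v)).mp (m.2 v)⟩,
     fun a => ⟨(m.1 a : ℤ), by push_cast; rfl⟩⟩⟩

noncomputable def fromL (σ : Q.V → ℤ)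
    (x : {x : Q.A → ℝ //
        ((∀ a : Q.A, 0 ≤ x a) ∧
          ∀ v : Q.V,
            ((∑ a : Q.A, if Q.t a = v then x a else 0) -
              ∑ a : Q.A, if Q.h a = v then x a else 0) = (σ v : ℝ)) ∧
        ∀ a : Q.A, ∃ k : ℤ, x a = (k : ℝ)}) :
    {m : Q.A → ℕ // ∀ v, divg Q m v = σ v} :=
  ⟨fun a => (Classical.choose (x.2.2 a)).toNat, by
    have hk : ∀ a, x.1 a = ((Classical.choose (x.2.2 a) : ℤ) : ℝ) :=
      fun a => Classical.choose_spec (x.2.2 a)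
    have hk0 : ∀ a, 0 ≤ Classical.choose (x.2.2 a) := by
      intro a
      have h0 := x.2.1.1 a
      rw [hk a] at h0
      exact_mod_cast h0
    intro v
    rw [divg_cast Q _ v (σ v)]
    have hmc : ∀ a, (((Classical.choose (x.2.2 a)).toNat : ℕ) : ℝ) = x.1 a := by
      intro a
      have ht : (((Classical.choose (x.2.2 a)).toNat : ℕ) : ℤ)
          = Classical.choose (x.2.2 a) := Int.toNat_of_nonneg (hk0 a)
      rw [← Int.cast_natCast (R := ℝ), ht]
      exact (hk a).symm
    simp_rw [hmc]
    exact x.2.1.2 v⟩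

lemma toL_fromL (σ : Q.V → ℤ) (x) : toL Q σ (fromL Q σ x) = x := by
  apply Subtype.ext
  funext a
  show (((Classical.choose (x.2.2 a)).toNat : ℕ) : ℝ) = x.1 a
  have hk : x.1 a = ((Classical.choose (x.2.2 a) : ℤ) : ℝ) :=
    Classical.choose_spec (x.2.2 a)
  have hk0 : 0 ≤ Classical.choose (x.2.2 a) := by
    have h0 := x.2.1.1 a
    rw [hk] at h0
    exact_mod_cast h0
  have ht : (((Classical.choose (x.2.2 a)).toNat : ℕ) : ℤ)
      = Classical.choose (x.2.2 a) := Int.toNat_of_nonneg hk0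
  rw [← Int.cast_natCast (R := ℝ), ht]
  exact hk.symm

lemma toL_inj (σ : Q.V → ℤ) : Function.Injective (toL Q σ) := by
  intro m m' h
  apply Subtype.ext
  funext a
  have h2 : ((m.1 a : ℕ) : ℝ) = ((m'.1 a : ℕ) : ℝ) := congrFun (congrArg Subtype.val h) a
  exact_mod_cast h2

noncomputable def flowEquiv (σ : Q.V → ℤ) :
    {m : Q.A → ℕ // ∀ v, divg Q m v = σ v} ≃
      {x : Q.A → ℝ //
        ((∀ a : Q.A, 0 ≤ x a) ∧
          ∀ v : Q.V,
            ((∑ a : Q.A, if Q.t a = v then x a else 0) -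
              ∑ a : Q.A, if Q.h a = v then x a else 0) = (σ v : ℝ)) ∧
        ∀ a : Q.A, ∃ k : ℤ, x a = (k : ℝ)} :=
  ⟨toL Q σ, fromL Q σ, fun m => toL_inj Q σ (toL_fromL Q σ (toL Q σ m)), toL_fromL Q σ⟩

end SIflow

/-- For a finite, connected, acyclic quiver `Q` and any integral weight `σ`,
the dimension of `SI(Q, 𝟏)_σ` equals the number of lattice points of the network flow
polytope `P_σ`. -/
theorem siDim_one_eq_card_lattice_points_flow_polytope
    (Q : FinQuiver) (hconn : Q.Connected) (hacyc : Q.Acyclic) (σ : Q.V → ℤ) :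
    Q.siDim (fun _ => 1) σ =
      Nat.card {x : Q.A → ℝ //
        ((∀ a : Q.A, 0 ≤ x a) ∧
          ∀ v : Q.V,
            ((∑ a : Q.A, if Q.t a = v then x a else 0) -
              ∑ a : Q.A, if Q.h a = v then x a else 0) = (σ v : ℝ)) ∧
        ∀ a : Q.A, ∃ k : ℤ, x a = (k : ℝ)} := by
  rw [SIflow.siDim_eq_card Q σ]
  exact Nat.card_congr (SIflow.flowEquiv Q σ)
end

section
/- Let Q be a finite, connected, acyclic quiver and let v₀ ∈ Q₀ be a vertex whose incident arrows are exactly ℓ incoming arrows a₁ : v₁ → v₀, …, a_ℓ : v_ℓ → v₀ and one outgoing arrow b : v₀ → w. Suppose β is a dimension vector and σ is an integral weight with β(v₀) ≥ β(w) and σ(v₀) = 0. Let Q̄ be the quiver with vertex set Q₀ \ {v₀} and arrow set (Q₁ \ {b, a₁, …, a_ℓ}) ∪ {b a₁, …, b a_ℓ}, where b a_i is a new arrow v_i → w, and let β̄ and σ̄ be the restrictions of β and σ to Q̄. Then SI(Q,β)_σ ≅ SI(Q̄,β̄)_{σ̄} as ℂ-vector spaces. -/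
/-- The quiver `Q̄` obtained from `Q` by removing the vertex `v₀`, whose unique outgoing
arrow is `b : v₀ → w`, and replacing each incoming arrow `aᵢ : vᵢ → v₀` by the composite
arrow `b aᵢ : vᵢ → w`. -/
def FinQuiver.removeVertex (Q : FinQuiver) (v₀ w : Q.V) (b : Q.A)
    (hw : w ≠ v₀) (huniq : ∀ c : Q.A, Q.t c = v₀ → c = b) : FinQuiver where
  V := {x : Q.V // x ≠ v₀}
  A := {c : Q.A // c ≠ b}
  t := fun c => ⟨Q.t c.val, fun hc => c.property (huniq c.val hc)⟩
  h := fun c => if hc : Q.h c.val = v₀ then ⟨w, hw⟩ else ⟨Q.h c.val, hc⟩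


open Matrix

noncomputable section
namespace SIRem

/-- cast a matrix along equalities of its `Fin` dimensions -/
def mcast {d1 d2 e1 e2 : ℕ} (h1 : d1 = d2) (h2 : e1 = e2)
    (M : Matrix (Fin d1) (Fin e1) ℂ) : Matrix (Fin d2) (Fin e2) ℂ :=
  M.submatrix (finCongr h1.symm) (finCongr h2.symm)

lemma mcast_apply {d1 d2 e1 e2 : ℕ} (h1 : d1 = d2) (h2 : e1 = e2)
    (M : Matrix (Fin d1) (Fin e1) ℂ) (i : Fin d2) (j : Fin e2) :
    mcast h1 h2 M i j = M (Fin.cast h1.symm i) (Fin.cast h2.symm j) := rfl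

@[simp] lemma mcast_refl {d e : ℕ} (h1 : d = d) (h2 : e = e) (M : Matrix (Fin d) (Fin e) ℂ) :
    mcast h1 h2 M = M := by
  ext i j
  exact congrArg₂ M (Fin.ext rfl) (Fin.ext rfl)

lemma mcast_mul {d1 d2 e1 e2 f1 f2 : ℕ} (h1 : d1 = d2) (h2 : e1 = e2) (h3 : f1 = f2)
    (A : Matrix (Fin d1) (Fin e1) ℂ) (B : Matrix (Fin e1) (Fin f1) ℂ) :
    mcast h1 h3 (A * B) = mcast h1 h2 A * mcast h2 h3 B :=
  (Matrix.submatrix_mul_equiv A B _ (finCongr h2.symm) _).symm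

lemma mcast_one {d1 d2 : ℕ} (h : d1 = d2) : mcast h h (1 : Matrix (Fin d1) (Fin d1) ℂ) = 1 :=
  Matrix.submatrix_one_equiv (finCongr h.symm)

lemma mcast_mcast {d1 d2 d3 e1 e2 e3 : ℕ} (h1 : d1 = d2) (h2 : e1 = e2)
    (h1' : d2 = d3) (h2' : e2 = e3) (M : Matrix (Fin d1) (Fin e1) ℂ) :
    mcast h1' h2' (mcast h1 h2 M) = mcast (h1.trans h1') (h2.trans h2') M := by
  ext i j; rfl

lemma mcast_mul_mcast {d1 d2 e1 e2 f1 f2 : ℕ} (h1 : d1 = d2) (h2 : e1 = e2) (h3 : f1 = f2)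
    (A : Matrix (Fin d1) (Fin e1) ℂ) (B : Matrix (Fin e1) (Fin f1) ℂ) :
    mcast h1 h2 A * mcast h2 h3 B = mcast h1 h3 (A * B) :=
  (mcast_mul h1 h2 h3 A B).symm

lemma mcast_transpose {d1 d2 e1 e2 : ℕ} (h1 : d1 = d2) (h2 : e1 = e2)
    (M : Matrix (Fin d1) (Fin e1) ℂ) : (mcast h1 h2 M)ᵀ = mcast h2 h1 Mᵀ := by
  ext i j; rfl

lemma mcast_eq_iff {d1 d2 e1 e2 : ℕ} (h1 : d1 = d2) (h2 : e1 = e2)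
    (M : Matrix (Fin d1) (Fin e1) ℂ) (N : Matrix (Fin d2) (Fin e2) ℂ) :
    mcast h1 h2 M = N ↔ M = mcast h1.symm h2.symm N := by
  subst h1; subst h2; simp

/-- the `m × n` matrix `[I 0]` -/
def Emat (m n : ℕ) (h : m ≤ n) : Matrix (Fin m) (Fin n) ℂ :=
  Matrix.of fun i j => if j = Fin.castLE h i then 1 else 0

lemma Emat_mul_transpose (m n : ℕ) (h : m ≤ n) : Emat m n h * (Emat m n h)ᵀ = 1 := by
  ext i j
  simp only [Emat, Matrix.mul_apply, Matrix.transpose_apply, Matrix.of_apply, ite_mul, one_mul,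
    zero_mul, Finset.sum_ite_eq', Finset.mem_univ, if_true]
  by_cases hij : i = j
  · subst hij; simp [Matrix.one_apply]
  · rw [if_neg (by simpa [Fin.castLE_inj] using hij), Matrix.one_apply_ne hij]



lemma idem_mul {n : ℕ} (p : Matrix (Fin n) (Fin n) ℂ) (hp : p * p = p) (s t : ℂ) :
    (p + s • (1 - p)) * (p + t • (1 - p)) = p + (s * t) • (1 - p) := by
  have h1 : p * (1 - p) = 0 := by rw [Matrix.mul_sub, Matrix.mul_one, hp, sub_self]
  have h2 : (1 - p) * p = 0 := by rw [Matrix.sub_mul, Matrix.one_mul, hp, sub_self]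
  have h3 : (1 - p) * (1 - p) = 1 - p := by
    rw [Matrix.sub_mul, Matrix.one_mul, Matrix.mul_sub, Matrix.mul_one, hp]; abel
  rw [Matrix.add_mul, Matrix.mul_add, Matrix.mul_add, hp, Matrix.mul_smul, h1, smul_zero,
    add_zero, Matrix.smul_mul, h2, smul_zero, zero_add, Matrix.smul_mul, Matrix.mul_smul, h3,
    smul_smul]

section Ealg

variable (m n : ℕ) (h : m ≤ n)

lemma EtE_idem : ((Emat m n h)ᵀ * Emat m n h) * ((Emat m n h)ᵀ * Emat m n h)
    = (Emat m n h)ᵀ * Emat m n h := by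
  rw [Matrix.mul_assoc, ← Matrix.mul_assoc (Emat m n h), Emat_mul_transpose, Matrix.one_mul]

lemma E_mul_EtE : Emat m n h * ((Emat m n h)ᵀ * Emat m n h) = Emat m n h := by
  rw [← Matrix.mul_assoc, Emat_mul_transpose, Matrix.one_mul]

lemma EtE_mul_Et : ((Emat m n h)ᵀ * Emat m n h) * (Emat m n h)ᵀ = (Emat m n h)ᵀ := by
  rw [Matrix.mul_assoc, Emat_mul_transpose, Matrix.mul_one]

lemma E_mul_sub1 : Emat m n h * (1 - (Emat m n h)ᵀ * Emat m n h) = 0 := by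
  rw [Matrix.mul_sub, Matrix.mul_one, E_mul_EtE, sub_self]

/-- the unit `diag(1, t⁻¹ 1)` -/
def projUnit (t : ℂ) (ht : t ≠ 0) : (Matrix (Fin n) (Fin n) ℂ)ˣ where
  val := (Emat m n h)ᵀ * Emat m n h + t⁻¹ • (1 - (Emat m n h)ᵀ * Emat m n h)
  inv := (Emat m n h)ᵀ * Emat m n h + t • (1 - (Emat m n h)ᵀ * Emat m n h)
  val_inv := by
    rw [idem_mul _ (EtE_idem m n h), inv_mul_cancel₀ ht, one_smul]; abel
  inv_val := by
    rw [idem_mul _ (EtE_idem m n h), mul_inv_cancel₀ ht, one_smul]; abel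

end Ealg

/-- the coordinates of a representation -/
def coords {Q : FinQuiver} {β : Q.V → ℕ} (W : Q.Rep β) :
    ((a : Q.A) × (Fin (β (Q.h a)) × Fin (β (Q.t a)))) → ℂ :=
  fun i => W i.1 i.2.1 i.2.2

lemma eval_bind {σ τ : Type} (x : τ → ℂ) (p : σ → MvPolynomial τ ℂ)
    (P : MvPolynomial σ ℂ) :
    MvPolynomial.eval x (MvPolynomial.bind₁ p P)
      = MvPolynomial.eval (fun i => MvPolynomial.eval x (p i)) P := by
  simpa using MvPolynomial.eval₂Hom_bind₁ (RingHom.id ℂ) x p P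

lemma isPolyFun_comp {Q₁ Q₂ : FinQuiver} {β₁ : Q₁.V → ℕ} {β₂ : Q₂.V → ℕ}
    (Φ : Q₁.Rep β₁ → Q₂.Rep β₂)
    (hΦ : ∀ i : (a : Q₂.A) × (Fin (β₂ (Q₂.h a)) × Fin (β₂ (Q₂.t a))),
      ∃ p : MvPolynomial ((a : Q₁.A) × (Fin (β₁ (Q₁.h a)) × Fin (β₁ (Q₁.t a)))) ℂ,
        ∀ W, coords (Φ W) i = MvPolynomial.eval (coords W) p)
    {f : Q₂.Rep β₂ → ℂ} (hf : Q₂.IsPolyFun f) :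
    Q₁.IsPolyFun (fun W => f (Φ W)) := by
  obtain ⟨P, hP⟩ := hf
  choose p hp using hΦ
  refine ⟨MvPolynomial.bind₁ p P, fun W => ?_⟩
  show f (Φ W) = _
  rw [hP (Φ W), eval_bind]
  exact congrArg (fun y => MvPolynomial.eval y P) (funext fun i => hp i W)

lemma polyFun_line {Q : FinQuiver} {β : Q.V → ℕ} {f : Q.Rep β → ℂ}
    (hf : Q.IsPolyFun f) (Wt : ℂ → Q.Rep β)
    (h : ∀ i, ∃ p : Polynomial ℂ, ∀ t, coords (Wt t) i = p.eval t) :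
    ∃ q : Polynomial ℂ, ∀ t, f (Wt t) = q.eval t := by
  obtain ⟨P, hP⟩ := hf
  choose p hp using h
  refine ⟨MvPolynomial.aeval p P, fun t => ?_⟩
  rw [hP (Wt t)]
  have h2 : (Polynomial.evalRingHom t) (MvPolynomial.aeval p P)
      = MvPolynomial.eval₂Hom ((Polynomial.evalRingHom t).comp (algebraMap ℂ (Polynomial ℂ)))
          (fun i => (Polynomial.evalRingHom t) (p i)) P := MvPolynomial.map_aeval p _ P
  have h3 : (Polynomial.evalRingHom t).comp (algebraMap ℂ (Polynomial ℂ)) = RingHom.id ℂ := by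
    ext c; simp
  rw [h3] at h2
  have h4 : Polynomial.eval t (MvPolynomial.aeval p P)
      = MvPolynomial.eval (fun i => Polynomial.eval t (p i)) P := h2
  rw [h4]
  exact congrArg (fun y => MvPolynomial.eval y P) (funext fun i => hp i t)

section Main

variable (Q : FinQuiver) (v₀ w : Q.V) (b : Q.A)
  (hbt : Q.t b = v₀) (hbh : Q.h b = w) (hw : w ≠ v₀)
  (huniq : ∀ c : Q.A, Q.t c = v₀ → c = b)
  (β : Q.V → ℕ) (hβ : β w ≤ β v₀)

local notation "Q'" => FinQuiver.removeVertex Q v₀ w b hw huniq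

abbrev β' : (Q').V → ℕ := fun x => β x.val

include huniq in
lemma t_ne {a : Q.A} (ha : a ≠ b) : Q.t a ≠ v₀ := fun h => ha (huniq a h)

include hbh hw in
lemma hb_ne : Q.h b ≠ v₀ := by rw [hbh]; exact hw

lemma h'_pos {c : (Q').A} (hc : Q.h c.val = v₀) : ((Q').h c).val = w := by
  show (dite _ _ _ : {x : Q.V // x ≠ v₀}).val = w
  rw [dif_pos hc]

lemma h'_neg {c : (Q').A} (hc : ¬ Q.h c.val = v₀) : ((Q').h c).val = Q.h c.val := by
  show (dite _ _ _ : {x : Q.V // x ≠ v₀}).val = Q.h c.val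
  rw [dif_neg hc]

/-- the matrix of the special arrow `b`, as a `β w × β v₀` matrix -/
def Wb (W : Q.Rep β) : Matrix (Fin (β w)) (Fin (β v₀)) ℂ :=
  mcast (congrArg β hbh) (congrArg β hbt) (W b)

/-- the projection `rep(Q,β) → rep(Q',β')` -/
def press (W : Q.Rep β) : (Q').Rep (β' Q v₀ w b hw huniq β) := fun c =>
  if hc : Q.h c.val = v₀ then
    mcast (congrArg β (h'_pos Q v₀ w b hw huniq hc)).symm rfl
      (Wb Q v₀ w b hbt hbh β W * mcast (congrArg β hc) rfl (W c.val))
  else mcast (congrArg β (h'_neg Q v₀ w b hw huniq hc)).symm rfl (W c.val)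

/-- the section `rep(Q',β') → rep(Q,β)` -/
def lift (X : (Q').Rep (β' Q v₀ w b hw huniq β)) : Q.Rep β := fun a =>
  if hab : a = b then
    mcast (congrArg β (show Q.h a = w from hab ▸ hbh)).symm
      (congrArg β (show Q.t a = v₀ from hab ▸ hbt)).symm (Emat (β w) (β v₀) hβ)
  else if hha : Q.h a = v₀ then
    mcast (congrArg β hha).symm rfl
      ((Emat (β w) (β v₀) hβ)ᵀ *
        mcast (congrArg β (h'_pos Q v₀ w b hw huniq (c := ⟨a, hab⟩) hha)) rfl (X ⟨a, hab⟩))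
  else mcast (congrArg β (h'_neg Q v₀ w b hw huniq (c := ⟨a, hab⟩) hha)) rfl (X ⟨a, hab⟩)


include hbt hbh in
lemma press_lift (X : (Q').Rep (β' Q v₀ w b hw huniq β)) :
    press Q v₀ w b hbt hbh hw huniq β (lift Q v₀ w b hbt hbh hw huniq β hβ X) = X := by
  funext c
  by_cases hc : Q.h c.val = v₀
  · simp only [press, dif_pos hc]
    have h1 : lift Q v₀ w b hbt hbh hw huniq β hβ X b
        = mcast (congrArg β (show Q.h b = w from hbh)).symm
            (congrArg β (show Q.t b = v₀ from hbt)).symm (Emat (β w) (β v₀) hβ) := by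
      simp [lift]
    have h2 : lift Q v₀ w b hbt hbh hw huniq β hβ X c.val
        = mcast (congrArg β hc).symm rfl
            ((Emat (β w) (β v₀) hβ)ᵀ *
              mcast (congrArg β (h'_pos Q v₀ w b hw huniq (c := c) hc)) rfl (X c)) := by
      simp only [lift, dif_neg c.prop, dif_pos hc]; rfl
    erw [Wb, h1, h2, mcast_mcast, mcast_mcast, mcast_refl, mcast_refl, ← Matrix.mul_assoc,
      Emat_mul_transpose, Matrix.one_mul, mcast_mcast, mcast_refl]
  · simp only [press, dif_neg hc]
    have h2 : lift Q v₀ w b hbt hbh hw huniq β hβ X c.val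
        = mcast (congrArg β (h'_neg Q v₀ w b hw huniq (c := c) hc)) rfl (X c) := by
      simp only [lift, dif_neg c.prop, dif_neg hc]; rfl
    rw [h2, mcast_mcast, mcast_refl]


lemma unit_cancel {d e : ℕ} (u : (Matrix (Fin d) (Fin d) ℂ)ˣ) (Z : Matrix (Fin d) (Fin e) ℂ) :
    u.val * ((↑u⁻¹ : Matrix (Fin d) (Fin d) ℂ) * Z) = Z := by
  rw [← Matrix.mul_assoc, Units.mul_inv, Matrix.one_mul]

lemma unit_cancel' {d e : ℕ} (u : (Matrix (Fin d) (Fin d) ℂ)ˣ) (Z : Matrix (Fin d) (Fin e) ℂ) :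
    (↑u⁻¹ : Matrix (Fin d) (Fin d) ℂ) * (u.val * Z) = Z := by
  rw [← Matrix.mul_assoc, Units.inv_mul, Matrix.one_mul]

lemma fcast (M : ∀ x : Q.V, Matrix (Fin (β x)) (Fin (β x)) ℂ) {x y : Q.V} (hxy : x = y) :
    mcast (congrArg β hxy) (congrArg β hxy) (M x) = M y := by
  subst hxy; exact mcast_refl _ _ _

lemma fcast' (M : ∀ x : Q.V, Matrix (Fin (β x)) (Fin (β x)) ℂ) {x y : Q.V} (hxy : x = y) :
    M x = mcast (congrArg β hxy).symm (congrArg β hxy).symm (M y) := by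
  subst hxy; exact (mcast_refl _ _ _).symm

/-- restriction of a group element to `Q'` -/
def resGL (g : Q.GLb β) : (Q').GLb (β' Q v₀ w b hw huniq β) := fun y => g y.val

/-- extension of a group element of `Q'` by the identity at `v₀` -/
def extGL (g' : (Q').GLb (β' Q v₀ w b hw huniq β)) : Q.GLb β :=
  fun x => if hx : x = v₀ then 1 else g' ⟨x, hx⟩

/-- transport of a unit along a vertex equality -/
def ucast {x : Q.V} (hx : x = v₀) (u : (Matrix (Fin (β v₀)) (Fin (β v₀)) ℂ)ˣ) :
    (Matrix (Fin (β x)) (Fin (β x)) ℂ)ˣ where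
  val := mcast (congrArg β hx).symm (congrArg β hx).symm u.val
  inv := mcast (congrArg β hx).symm (congrArg β hx).symm (↑u⁻¹)
  val_inv := by rw [mcast_mul_mcast, Units.mul_inv, mcast_one]
  inv_val := by rw [mcast_mul_mcast, Units.inv_mul, mcast_one]

/-- the group element supported at `v₀` -/
def vext (u : (Matrix (Fin (β v₀)) (Fin (β v₀)) ℂ)ˣ) : Q.GLb β :=
  fun x => if hx : x = v₀ then ucast Q v₀ β hx u else 1

lemma resGL_extGL (g' : (Q').GLb (β' Q v₀ w b hw huniq β)) :
    resGL Q v₀ w b hw huniq β (extGL Q v₀ w b hw huniq β g') = g' :=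
  funext fun y => dif_neg y.prop

lemma resGL_vext (u : (Matrix (Fin (β v₀)) (Fin (β v₀)) ℂ)ˣ) :
    resGL Q v₀ w b hw huniq β (vext Q v₀ β u) = fun _ => 1 :=
  funext fun y => dif_neg y.prop

include hbt hbh in
lemma Wb_invAct (g : Q.GLb β) (W : Q.Rep β) :
    Wb Q v₀ w b hbt hbh β (Q.invAct g W)
      = ((g w)⁻¹).val * Wb Q v₀ w b hbt hbh β W * (g v₀).val := by
  subst hbt; subst hbh
  simp only [Wb, FinQuiver.invAct, mcast_refl]

include hbt hbh hw huniq in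
lemma Wb_vext (u : (Matrix (Fin (β v₀)) (Fin (β v₀)) ℂ)ˣ) (W : Q.Rep β) :
    Wb Q v₀ w b hbt hbh β (Q.invAct (vext Q v₀ β u) W)
      = Wb Q v₀ w b hbt hbh β W * u.val := by
  rw [Wb_invAct Q v₀ w b hbt hbh β]
  simp only [vext, dif_neg hw, dif_pos rfl, inv_one, Units.val_one, Matrix.one_mul]
  rw [dif_pos trivial]
  show Wb Q v₀ w b hbt hbh β W *
      mcast (congrArg β (rfl : v₀ = v₀)).symm (congrArg β (rfl : v₀ = v₀)).symm u.val = _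
  rw [mcast_refl]

include hbt hbh hw huniq in
lemma invAct_vext_in (u : (Matrix (Fin (β v₀)) (Fin (β v₀)) ℂ)ˣ) (W : Q.Rep β)
    {a : Q.A} (ha : a ≠ b) (hha : Q.h a = v₀) :
    Q.invAct (vext Q v₀ β u) W a
      = mcast (congrArg β hha).symm rfl
          ((↑u⁻¹ : Matrix (Fin (β v₀)) (Fin (β v₀)) ℂ) * mcast (congrArg β hha) rfl (W a)) := by
  simp only [FinQuiver.invAct, vext, dif_pos hha, dif_neg (t_ne Q v₀ b huniq ha)]
  rw [Units.val_one, Matrix.mul_one]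
  rw [mcast_mul (congrArg β hha).symm (congrArg β hha).symm rfl, mcast_mcast, mcast_refl]
  rfl

include hbt hbh hw huniq in
lemma invAct_vext_out (u : (Matrix (Fin (β v₀)) (Fin (β v₀)) ℂ)ˣ) (W : Q.Rep β)
    {a : Q.A} (ha : a ≠ b) (hha : Q.h a ≠ v₀) :
    Q.invAct (vext Q v₀ β u) W a = W a := by
  simp only [FinQuiver.invAct, vext, dif_neg hha, dif_neg (t_ne Q v₀ b huniq ha)]
  rw [inv_one, Units.val_one, Units.val_one, Matrix.one_mul, Matrix.mul_one]


lemma sandwich {p e : ℕ} {p2 : ℕ} (h : p = p2) (A : Matrix (Fin p) (Fin p) ℂ)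
    (B : Matrix (Fin p) (Fin e) ℂ) (C : Matrix (Fin e) (Fin e) ℂ) :
    mcast h h A * mcast h rfl B * C = mcast h rfl (A * B * C) := by
  subst h; simp

include hbt hbh in
lemma press_invAct (g : Q.GLb β) (W : Q.Rep β) :
    press Q v₀ w b hbt hbh hw huniq β (Q.invAct g W)
      = (Q').invAct (resGL Q v₀ w b hw huniq β g)
          (press Q v₀ w b hbt hbh hw huniq β W) := by
  funext c
  simp only [press, FinQuiver.invAct, resGL]
  by_cases hc : Q.h c.val = v₀
  · rw [dif_pos hc, dif_pos hc, Wb_invAct Q v₀ w b hbt hbh β,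
      mcast_mul (congrArg β hc) rfl rfl, mcast_refl,
      mcast_mul (congrArg β hc) (congrArg β hc) rfl,
      fcast Q β (fun x => ((g x)⁻¹).val) hc,
      fcast' Q β (fun x => ((g x)⁻¹).val) (h'_pos Q v₀ w b hw huniq hc)]
    refine Eq.trans ?_ (sandwich _ _ _ _).symm
    congr 1
    simp only [Matrix.mul_assoc, unit_cancel]
    exact (congrArg (HMul.hMul _) (Matrix.mul_assoc _ _ _).symm).trans (Matrix.mul_assoc _ _ _).symm
  · erw [dif_neg hc, dif_neg hc,
      mcast_mul (congrArg β (h'_neg Q v₀ w b hw huniq hc)).symm rfl rfl, mcast_refl,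
      mcast_mul (congrArg β (h'_neg Q v₀ w b hw huniq hc)).symm
        (congrArg β (h'_neg Q v₀ w b hw huniq hc)).symm rfl,
      fcast Q β (fun x => ((g x)⁻¹).val) (h'_neg Q v₀ w b hw huniq hc).symm]
    rfl


variable (σ : Q.V → ℤ)

lemma prod_split (F : Q.V → ℂ) :
    ∏ x : Q.V, F x = F v₀ * ∏ y : {x : Q.V // x ≠ v₀}, F y.val := by
  rw [← Finset.mul_prod_erase Finset.univ F (Finset.mem_univ v₀)]
  congr 1
  exact Finset.prod_subtype (Finset.univ.erase v₀) (by simp) F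

lemma detWeight_resGL (hσ : σ v₀ = 0) (g : Q.GLb β) :
    Q.detWeight σ g
      = (Q').detWeight (fun y => σ y.val) (resGL Q v₀ w b hw huniq β g) := by
  unfold FinQuiver.detWeight
  rw [prod_split Q v₀ (fun x => ((g x).val).det ^ (σ x))]
  rw [hσ, zpow_zero, one_mul]
  rfl

lemma detWeight_extGL (hσ : σ v₀ = 0) (g' : (Q').GLb (β' Q v₀ w b hw huniq β)) :
    Q.detWeight σ (extGL Q v₀ w b hw huniq β g')
      = (Q').detWeight (fun y => σ y.val) g' := by
  rw [detWeight_resGL Q v₀ w b hw huniq β σ hσ, resGL_extGL]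

include w b hw huniq in
lemma detWeight_vext (hσ : σ v₀ = 0) (u : (Matrix (Fin (β v₀)) (Fin (β v₀)) ℂ)ˣ) :
    Q.detWeight σ (vext Q v₀ β u) = 1 := by
  rw [detWeight_resGL Q v₀ w b hw huniq β σ hσ, resGL_vext]
  unfold FinQuiver.detWeight
  simp


open MvPolynomial in
include hbt hbh in
lemma press_entries :
    ∀ i : (c : (Q').A) × (Fin ((β' Q v₀ w b hw huniq β) ((Q').h c))
        × Fin ((β' Q v₀ w b hw huniq β) ((Q').t c))),
      ∃ p : MvPolynomial ((a : Q.A) × (Fin (β (Q.h a)) × Fin (β (Q.t a)))) ℂ,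
        ∀ W : Q.Rep β, coords (press Q v₀ w b hbt hbh hw huniq β W) i
          = MvPolynomial.eval (coords W) p := by
  rintro ⟨c, i, j⟩
  by_cases hc : Q.h c.val = v₀
  · refine ⟨∑ k : Fin (β v₀),
      (X ⟨b, (Fin.cast (congrArg β hbh).symm
                (Fin.cast (congrArg β (h'_pos Q v₀ w b hw huniq hc)) i),
              Fin.cast (congrArg β hbt).symm k)⟩ :
        MvPolynomial ((a : Q.A) × (Fin (β (Q.h a)) × Fin (β (Q.t a)))) ℂ)
        * X ⟨c.val, (Fin.cast (congrArg β hc).symm k, j)⟩, fun W => ?_⟩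
    simp only [coords, press, dif_pos hc, mcast_apply, Matrix.mul_apply, Wb,
      map_sum, MvPolynomial.eval_mul, MvPolynomial.eval_X]
    rfl
  · refine ⟨X ⟨c.val, (Fin.cast (congrArg β (h'_neg Q v₀ w b hw huniq hc)) i, j)⟩, fun W => ?_⟩
    simp only [coords, press, dif_neg hc, mcast_apply, MvPolynomial.eval_X]
    rfl

open MvPolynomial in
include hbt hbh in
lemma lift_entries :
    ∀ i : (a : Q.A) × (Fin (β (Q.h a)) × Fin (β (Q.t a))),
      ∃ p : MvPolynomial ((c : (Q').A) × (Fin ((β' Q v₀ w b hw huniq β) ((Q').h c))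
          × Fin ((β' Q v₀ w b hw huniq β) ((Q').t c)))) ℂ,
        ∀ X' : (Q').Rep (β' Q v₀ w b hw huniq β),
          coords (lift Q v₀ w b hbt hbh hw huniq β hβ X') i
            = MvPolynomial.eval (coords X') p := by
  rintro ⟨a, i, j⟩
  by_cases hab : a = b
  · refine ⟨MvPolynomial.C (Emat (β w) (β v₀) hβ
        (Fin.cast (congrArg β (show Q.h a = w from hab ▸ hbh)) i)
        (Fin.cast (congrArg β (show Q.t a = v₀ from hab ▸ hbt)) j)), fun X' => ?_⟩
    simp only [coords, lift, dif_pos hab, mcast_apply, MvPolynomial.eval_C]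
  · by_cases hha : Q.h a = v₀
    · refine ⟨∑ k : Fin (β w),
        MvPolynomial.C ((Emat (β w) (β v₀) hβ)ᵀ (Fin.cast (congrArg β hha) i) k)
          * X ⟨⟨a, hab⟩, (Fin.cast (congrArg β (h'_pos Q v₀ w b hw huniq
              (c := ⟨a, hab⟩) hha)).symm k, j)⟩, fun X' => ?_⟩
      simp only [coords, lift, dif_neg hab, dif_pos hha, mcast_apply, Matrix.mul_apply,
        map_sum, MvPolynomial.eval_mul, MvPolynomial.eval_C, MvPolynomial.eval_X]
      rfl
    · refine ⟨X ⟨⟨a, hab⟩, (Fin.cast (congrArg β (h'_neg Q v₀ w b hw huniq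
          (c := ⟨a, hab⟩) hha)).symm i, j)⟩, fun X' => ?_⟩
      simp only [coords, lift, dif_neg hab, dif_neg hha, mcast_apply, MvPolynomial.eval_X]
      rfl


include hbt hbh hw huniq in
lemma invAct_vext_b (u : (Matrix (Fin (β v₀)) (Fin (β v₀)) ℂ)ˣ) (W : Q.Rep β) :
    Q.invAct (vext Q v₀ β u) W b
      = mcast (congrArg β hbh).symm (congrArg β hbt).symm
          (Wb Q v₀ w b hbt hbh β W * u.val) := by
  rw [← Wb_vext Q v₀ w b hbt hbh hw huniq β u W, Wb, mcast_mcast, mcast_refl]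

/-- kill the complement-of-image block of every arrow entering `v₀` -/
def trunc (W : Q.Rep β) : Q.Rep β := fun a =>
  if a = b then W a
  else if hha : Q.h a = v₀ then
    mcast (congrArg β hha).symm rfl
      (((Emat (β w) (β v₀) hβ)ᵀ * Emat (β w) (β v₀) hβ) * mcast (congrArg β hha) rfl (W a))
  else W a

/-- scaling family: multiply the complement block of arrows entering `v₀` by `t` -/
def scaleFam (W : Q.Rep β) (t : ℂ) : Q.Rep β := fun a =>
  if a = b then W a
  else if hha : Q.h a = v₀ then
    mcast (congrArg β hha).symm rfl
      (((Emat (β w) (β v₀) hβ)ᵀ * Emat (β w) (β v₀) hβ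
          + t • (1 - (Emat (β w) (β v₀) hβ)ᵀ * Emat (β w) (β v₀) hβ))
        * mcast (congrArg β hha) rfl (W a))
  else W a

include hbt hbh hw huniq in
lemma f_trunc (σ : Q.V → ℤ) (hσ : σ v₀ = 0) {f : Q.Rep β → ℂ} (hpoly : Q.IsPolyFun f)
    (hinv : ∀ (g : Q.GLb β) (W : Q.Rep β), f (Q.invAct g W) = Q.detWeight σ g * f W)
    (W : Q.Rep β) (hWb : Wb Q v₀ w b hbt hbh β W = Emat (β w) (β v₀) hβ) :
    f (trunc Q v₀ w b β hβ W) = f W := by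
  have hent : ∀ i, ∃ p : Polynomial ℂ, ∀ t,
      coords (scaleFam Q v₀ w b β hβ W t) i = p.eval t := by
    rintro ⟨a, i, j⟩
    by_cases hab : a = b
    · exact ⟨Polynomial.C (W a i j), fun t => by simp [coords, scaleFam, if_pos hab]⟩
    · by_cases hha : Q.h a = v₀
      · refine ⟨Polynomial.C ((mcast (congrArg β hha).symm rfl
            (((Emat (β w) (β v₀) hβ)ᵀ * Emat (β w) (β v₀) hβ)
              * mcast (congrArg β hha) rfl (W a))) i j)
            + Polynomial.C ((mcast (congrArg β hha).symm rfl
            ((1 - (Emat (β w) (β v₀) hβ)ᵀ * Emat (β w) (β v₀) hβ)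
              * mcast (congrArg β hha) rfl (W a))) i j) * Polynomial.X, fun t => ?_⟩
        simp only [coords, scaleFam, if_neg hab, dif_pos hha, mcast_apply, Matrix.add_mul,
          Matrix.smul_mul, Matrix.add_apply, Matrix.smul_apply, smul_eq_mul,
          Polynomial.eval_add, Polynomial.eval_mul, Polynomial.eval_C, Polynomial.eval_X]
        ring
      · exact ⟨Polynomial.C (W a i j), fun t => by
          simp [coords, scaleFam, if_neg hab, dif_neg hha]⟩
  obtain ⟨q, hq⟩ := polyFun_line hpoly (scaleFam Q v₀ w b β hβ W) hent
  have hWfam_act : ∀ (t : ℂ) (ht : t ≠ 0),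
      scaleFam Q v₀ w b β hβ W t
        = Q.invAct (vext Q v₀ β (projUnit (β w) (β v₀) hβ t ht)) W := by
    intro t ht
    funext a
    by_cases hab : a = b
    · subst hab
      rw [invAct_vext_b Q v₀ w a hbt hbh hw huniq β]
      have h2 : Wb Q v₀ w a hbt hbh β W * (projUnit (β w) (β v₀) hβ t ht).val
          = Emat (β w) (β v₀) hβ := by
        rw [hWb]
        show Emat (β w) (β v₀) hβ * ((Emat (β w) (β v₀) hβ)ᵀ * Emat (β w) (β v₀) hβ
          + t⁻¹ • (1 - (Emat (β w) (β v₀) hβ)ᵀ * Emat (β w) (β v₀) hβ)) = _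
        rw [Matrix.mul_add, Matrix.mul_smul, E_mul_EtE, E_mul_sub1, smul_zero, add_zero]
      rw [h2, ← hWb, Wb, mcast_mcast, mcast_refl]
      exact if_pos rfl
    · by_cases hha : Q.h a = v₀
      · rw [invAct_vext_in Q v₀ w b hbt hbh hw huniq β _ W hab hha]
        show (if a = b then W a else _) = _
        rw [if_neg hab, dif_pos hha]
        rfl
      · rw [invAct_vext_out Q v₀ w b hbt hbh hw huniq β _ W hab hha]
        show (if a = b then W a else _) = _
        rw [if_neg hab, dif_neg hha]
  have hconst : ∀ t : ℂ, t ≠ 0 → q.eval t = f W := by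
    intro t ht
    rw [← hq t, hWfam_act t ht, hinv, detWeight_vext Q v₀ w b hw huniq β σ hσ, one_mul]
  have hq0 : q = Polynomial.C (f W) := by
    by_contra hne
    have hsub : q - Polynomial.C (f W) ≠ 0 := sub_ne_zero.mpr hne
    have hinf : ({x : ℂ | (q - Polynomial.C (f W)).IsRoot x}).Infinite := by
      apply Set.Infinite.mono (s := ({(0 : ℂ)}ᶜ : Set ℂ))
      · intro x hx
        simp only [Set.mem_compl_iff, Set.mem_singleton_iff] at hx
        simp [Polynomial.IsRoot, hconst x hx]
      · exact Set.Finite.infinite_compl (Set.finite_singleton 0)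
    exact hsub (Polynomial.eq_zero_of_infinite_isRoot _ hinf)
  have h0 : trunc Q v₀ w b β hβ W = scaleFam Q v₀ w b β hβ W 0 := by
    funext a
    by_cases hab : a = b
    · rw [trunc, scaleFam, if_pos hab, if_pos hab]
    · by_cases hha : Q.h a = v₀
      · rw [trunc, scaleFam, if_neg hab, if_neg hab, dif_pos hha, dif_pos hha,
          zero_smul, add_zero]
      · rw [trunc, scaleFam, if_neg hab, if_neg hab, dif_neg hha, dif_neg hha]
  rw [h0, hq 0, hq0, Polynomial.eval_C]


include hbt hbh hw huniq in
lemma f_liftpress_of_unit (σ : Q.V → ℤ) (hσ : σ v₀ = 0) {f : Q.Rep β → ℂ}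
    (hpoly : Q.IsPolyFun f)
    (hinv : ∀ (g : Q.GLb β) (W : Q.Rep β), f (Q.invAct g W) = Q.detWeight σ g * f W)
    (W : Q.Rep β)
    (hU : IsUnit (Wb Q v₀ w b hbt hbh β W * (Emat (β w) (β v₀) hβ)ᵀ)) :
    f (lift Q v₀ w b hbt hbh hw huniq β hβ (press Q v₀ w b hbt hbh hw huniq β W)) = f W := by
  set E := Emat (β w) (β v₀) hβ with hE
  set B := Wb Q v₀ w b hbt hbh β W with hB
  set N : Matrix (Fin (β w)) (Fin (β w)) ℂ := ((hU.unit)⁻¹ : _ˣ).val with hN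
  have hMN : (B * Eᵀ) * N = 1 := hU.mul_val_inv
  have hNM : N * (B * Eᵀ) = 1 := hU.val_inv_mul
  have key1 : (1 + Eᵀ * (N * (E - B))) * (1 + Eᵀ * (B - E)) = 1 := by
    have hAD : (Eᵀ * (N * (E - B))) * (Eᵀ * (B - E))
        = Eᵀ * (N * (B - E)) - Eᵀ * (B - E) := by
      calc (Eᵀ * (N * (E - B))) * (Eᵀ * (B - E))
          = Eᵀ * (N * ((E - B) * (Eᵀ * (B - E)))) := by
            rw [Matrix.mul_assoc, Matrix.mul_assoc]
        _ = Eᵀ * (N * (((E - B) * Eᵀ) * (B - E))) := by rw [Matrix.mul_assoc]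
        _ = Eᵀ * (N * ((1 - B * Eᵀ) * (B - E))) := by
            rw [Matrix.sub_mul, hE, Emat_mul_transpose]
        _ = Eᵀ * (N * ((B - E) - (B * Eᵀ) * (B - E))) := by
            rw [Matrix.sub_mul, Matrix.one_mul]
        _ = Eᵀ * (N * (B - E) - N * ((B * Eᵀ) * (B - E))) := by rw [Matrix.mul_sub]
        _ = Eᵀ * (N * (B - E) - (B - E)) := by
            rw [← Matrix.mul_assoc N, hNM, Matrix.one_mul]
        _ = Eᵀ * (N * (B - E)) - Eᵀ * (B - E) := by rw [Matrix.mul_sub]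
    have hz : Eᵀ * (N * (E - B)) + Eᵀ * (N * (B - E)) = 0 := by
      rw [← Matrix.mul_add, ← Matrix.mul_add,
        show (E - B) + (B - E) = 0 from by abel, Matrix.mul_zero, Matrix.mul_zero]
    calc (1 + Eᵀ * (N * (E - B))) * (1 + Eᵀ * (B - E))
        = (1 + Eᵀ * (B - E)) + (Eᵀ * (N * (E - B))
            + (Eᵀ * (N * (E - B))) * (Eᵀ * (B - E))) := by
          rw [Matrix.add_mul, Matrix.one_mul, Matrix.mul_add, Matrix.mul_one]
      _ = (1 + Eᵀ * (B - E)) + ((Eᵀ * (N * (E - B)) + Eᵀ * (N * (B - E)))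
            - Eᵀ * (B - E)) := by rw [hAD]; abel
      _ = 1 := by rw [hz]; abel
  have key2 : (1 + Eᵀ * (B - E)) * (1 + Eᵀ * (N * (E - B))) = 1 := by
    have hDA : (Eᵀ * (B - E)) * (Eᵀ * (N * (E - B)))
        = Eᵀ * (E - B) - Eᵀ * (N * (E - B)) := by
      calc (Eᵀ * (B - E)) * (Eᵀ * (N * (E - B)))
          = Eᵀ * ((B - E) * (Eᵀ * (N * (E - B)))) := by rw [Matrix.mul_assoc]
        _ = Eᵀ * (((B - E) * Eᵀ) * (N * (E - B))) := by rw [Matrix.mul_assoc]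
        _ = Eᵀ * ((B * Eᵀ - 1) * (N * (E - B))) := by
            rw [Matrix.sub_mul, hE, Emat_mul_transpose]
        _ = Eᵀ * ((B * Eᵀ) * (N * (E - B)) - N * (E - B)) := by
            rw [Matrix.sub_mul, Matrix.one_mul]
        _ = Eᵀ * ((E - B) - N * (E - B)) := by
            rw [← Matrix.mul_assoc (B * Eᵀ), hMN, Matrix.one_mul]
        _ = Eᵀ * (E - B) - Eᵀ * (N * (E - B)) := by rw [Matrix.mul_sub]
    have hz : Eᵀ * (B - E) + Eᵀ * (E - B) = 0 := by
      rw [← Matrix.mul_add, show (B - E) + (E - B) = 0 from by abel, Matrix.mul_zero]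
    calc (1 + Eᵀ * (B - E)) * (1 + Eᵀ * (N * (E - B)))
        = (1 + Eᵀ * (N * (E - B))) + (Eᵀ * (B - E)
            + (Eᵀ * (B - E)) * (Eᵀ * (N * (E - B)))) := by
          rw [Matrix.add_mul, Matrix.one_mul, Matrix.mul_add, Matrix.mul_one]
      _ = (1 + Eᵀ * (N * (E - B))) + ((Eᵀ * (B - E) + Eᵀ * (E - B))
            - Eᵀ * (N * (E - B))) := by rw [hDA]; abel
      _ = 1 := by rw [hz]; abel
  set u₁ : (Matrix (Fin (β v₀)) (Fin (β v₀)) ℂ)ˣ :=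
    ⟨1 + Eᵀ * (N * (E - B)), 1 + Eᵀ * (B - E), key1, key2⟩ with hu₁
  have hfW' : f (Q.invAct (vext Q v₀ β u₁) W) = f W := by
    rw [hinv, detWeight_vext Q v₀ w b hw huniq β σ hσ, one_mul]
  have hWb' : Wb Q v₀ w b hbt hbh β (Q.invAct (vext Q v₀ β u₁) W) = E := by
    rw [Wb_vext Q v₀ w b hbt hbh hw huniq β, ← hB]
    show B * (1 + Eᵀ * (N * (E - B))) = E
    calc B * (1 + Eᵀ * (N * (E - B)))
        = B + (B * Eᵀ) * (N * (E - B)) := by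
          rw [Matrix.mul_add, Matrix.mul_one, Matrix.mul_assoc]
      _ = B + (E - B) := by rw [← Matrix.mul_assoc (B * Eᵀ), hMN, Matrix.one_mul]
      _ = E := by abel
  have htr : f (trunc Q v₀ w b β hβ (Q.invAct (vext Q v₀ β u₁) W))
      = f (Q.invAct (vext Q v₀ β u₁) W) :=
    f_trunc Q v₀ w b hbt hbh hw huniq β hβ σ hσ hpoly hinv _ hWb'
  have heq : trunc Q v₀ w b β hβ (Q.invAct (vext Q v₀ β u₁) W)
      = lift Q v₀ w b hbt hbh hw huniq β hβ (press Q v₀ w b hbt hbh hw huniq β W) := by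
    funext a
    by_cases hab : a = b
    · subst hab
      have h1 : Q.invAct (vext Q v₀ β u₁) W a
          = mcast (congrArg β hbh).symm (congrArg β hbt).symm E := by
        rw [← hWb', Wb, mcast_mcast, mcast_refl]
      have h2 : lift Q v₀ w a hbt hbh hw huniq β hβ
            (press Q v₀ w a hbt hbh hw huniq β W) a
          = mcast (congrArg β (show Q.h a = w from hbh)).symm
              (congrArg β (show Q.t a = v₀ from hbt)).symm (Emat (β w) (β v₀) hβ) := by
        simp [lift]
      rw [trunc, if_pos rfl, h1, h2]
    · by_cases hha : Q.h a = v₀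
      · rw [trunc, if_neg hab, dif_pos hha,
          invAct_vext_in Q v₀ w b hbt hbh hw huniq β _ W hab hha,
          mcast_mcast, mcast_refl]
        have hval : (↑(u₁⁻¹) : Matrix (Fin (β v₀)) (Fin (β v₀)) ℂ) = 1 + Eᵀ * (B - E) := rfl
        rw [hval]
        have hPg : (Eᵀ * E) * (1 + Eᵀ * (B - E)) = Eᵀ * B := by
          calc (Eᵀ * E) * (1 + Eᵀ * (B - E))
              = Eᵀ * E + ((Eᵀ * E) * Eᵀ) * (B - E) := by
                rw [Matrix.mul_add, Matrix.mul_one, Matrix.mul_assoc (Eᵀ * E)]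
            _ = Eᵀ * E + Eᵀ * (B - E) := by rw [hE, EtE_mul_Et]
            _ = Eᵀ * E + (Eᵀ * B - Eᵀ * E) := by rw [Matrix.mul_sub]
            _ = Eᵀ * B := by abel
        rw [← Matrix.mul_assoc, hPg, Matrix.mul_assoc]
        -- now compute the lift∘press side
        have h3 : press Q v₀ w b hbt hbh hw huniq β W ⟨a, hab⟩
            = mcast (congrArg β (h'_pos Q v₀ w b hw huniq (c := ⟨a, hab⟩) hha)).symm rfl
                (B * mcast (congrArg β hha) rfl (W a)) := by
          simp only [press, dif_pos hha]; rfl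
        have h4 : lift Q v₀ w b hbt hbh hw huniq β hβ
              (press Q v₀ w b hbt hbh hw huniq β W) a
            = mcast (congrArg β hha).symm rfl
                (Eᵀ * (B * mcast (congrArg β hha) rfl (W a))) := by
          simp only [lift, dif_neg hab, dif_pos hha, h3, mcast_mcast, mcast_refl]; rfl
        rw [h4]
      · rw [trunc, if_neg hab, dif_neg hha,
          invAct_vext_out Q v₀ w b hbt hbh hw huniq β _ W hab hha]
        have h3 : press Q v₀ w b hbt hbh hw huniq β W ⟨a, hab⟩
            = mcast (congrArg β (h'_neg Q v₀ w b hw huniq (c := ⟨a, hab⟩) hha)).symm rfl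
                (W a) := by
          simp only [press, dif_neg hha]; rfl
        simp only [lift, dif_neg hab, dif_neg hha, h3, mcast_mcast, mcast_refl]
  rw [heq] at htr
  rw [htr, hfW']


open MvPolynomial in
include hbt hbh hw huniq in
lemma f_liftpress (σ : Q.V → ℤ) (hσ : σ v₀ = 0) {f : Q.Rep β → ℂ}
    (hpoly : Q.IsPolyFun f)
    (hinv : ∀ (g : Q.GLb β) (W : Q.Rep β), f (Q.invAct g W) = Q.detWeight σ g * f W)
    (W : Q.Rep β) :
    f (lift Q v₀ w b hbt hbh hw huniq β hβ (press Q v₀ w b hbt hbh hw huniq β W)) = f W := by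
  have hpoly2 : Q.IsPolyFun (fun W =>
      f (lift Q v₀ w b hbt hbh hw huniq β hβ (press Q v₀ w b hbt hbh hw huniq β W))) := by
    have h1 : (Q').IsPolyFun (fun X' => f (lift Q v₀ w b hbt hbh hw huniq β hβ X')) :=
      isPolyFun_comp _ (lift_entries Q v₀ w b hbt hbh hw huniq β hβ) hpoly
    exact isPolyFun_comp _ (press_entries Q v₀ w b hbt hbh hw huniq β) h1
  obtain ⟨P1, hP1⟩ := hpoly
  obtain ⟨P2, hP2⟩ := hpoly2
  set Pd : MvPolynomial ((a : Q.A) × (Fin (β (Q.h a)) × Fin (β (Q.t a)))) ℂ :=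
    (Matrix.of fun i j : Fin (β w) =>
      (X ⟨b, (Fin.cast (congrArg β hbh).symm i,
              Fin.cast (congrArg β hbt).symm (Fin.castLE hβ j))⟩ :
        MvPolynomial ((a : Q.A) × (Fin (β (Q.h a)) × Fin (β (Q.t a)))) ℂ)).det with hPdDef
  have hPd : ∀ W0 : Q.Rep β, MvPolynomial.eval (coords W0) Pd
      = (Wb Q v₀ w b hbt hbh β W0 * (Emat (β w) (β v₀) hβ)ᵀ).det := by
    intro W0
    rw [hPdDef, RingHom.map_det]
    congr 1
    ext i j
    simp only [RingHom.mapMatrix_apply, Matrix.map_apply, Matrix.of_apply, eval_X,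
      Matrix.mul_apply, Matrix.transpose_apply, Emat, Wb, mcast_apply, Matrix.of_apply,
      mul_ite, mul_one, mul_zero, Finset.sum_ite_eq', Finset.mem_univ, if_true]
    rfl
  have hall : ∀ x : ((a : Q.A) × (Fin (β (Q.h a)) × Fin (β (Q.t a)))) → ℂ,
      MvPolynomial.eval x (Pd * (P1 - P2)) = 0 := by
    intro x
    set W0 : Q.Rep β := fun a => Matrix.of fun i j => x ⟨a, (i, j)⟩ with hW0
    have hx : x = coords W0 := by funext i; rfl
    rw [hx, _root_.map_mul, map_sub]
    rcases eq_or_ne ((Wb Q v₀ w b hbt hbh β W0 * (Emat (β w) (β v₀) hβ)ᵀ).det) 0 with h | h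
    · rw [hPd, h, zero_mul]
    · have hU : IsUnit (Wb Q v₀ w b hbt hbh β W0 * (Emat (β w) (β v₀) hβ)ᵀ) :=
        (Matrix.isUnit_iff_isUnit_det _).mpr (isUnit_iff_ne_zero.mpr h)
      have hcl := f_liftpress_of_unit Q v₀ w b hbt hbh hw huniq β hβ σ hσ
        ⟨P1, hP1⟩ hinv W0 hU
      have e1 : (MvPolynomial.eval (coords W0)) P1 = f W0 := (hP1 W0).symm
      have e2 : (MvPolynomial.eval (coords W0)) P2
          = f (lift Q v₀ w b hbt hbh hw huniq β hβ
              (press Q v₀ w b hbt hbh hw huniq β W0)) := (hP2 W0).symm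
      rw [e1, e2, hcl, sub_self, mul_zero]
  have hprod : Pd * (P1 - P2) = 0 :=
    MvPolynomial.funext (fun x => by rw [hall x, map_zero])
  have hPd0 : Pd ≠ 0 := by
    intro h0
    set W0 : Q.Rep β := fun a =>
      if hab : a = b then
        mcast (congrArg β (show Q.h a = w from hab ▸ hbh)).symm
          (congrArg β (show Q.t a = v₀ from hab ▸ hbt)).symm (Emat (β w) (β v₀) hβ)
      else 0 with hW0
    have h1 : Wb Q v₀ w b hbt hbh β W0 = Emat (β w) (β v₀) hβ := by
      have hb0 : W0 b = mcast (congrArg β (show Q.h b = w from hbh)).symm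
          (congrArg β (show Q.t b = v₀ from hbt)).symm (Emat (β w) (β v₀) hβ) := by
        simp [hW0]
      rw [Wb, hb0, mcast_mcast, mcast_refl]
    have h2 := hPd W0
    rw [h0, map_zero, h1, Emat_mul_transpose, Matrix.det_one] at h2
    exact zero_ne_one h2
  rcases mul_eq_zero.mp hprod with h | h
  · exact absurd h hPd0
  · calc f (lift Q v₀ w b hbt hbh hw huniq β hβ (press Q v₀ w b hbt hbh hw huniq β W))
        = MvPolynomial.eval (fun i => W i.fst i.snd.1 i.snd.2) P2 := hP2 W
      _ = MvPolynomial.eval (fun i => W i.fst i.snd.1 i.snd.2) P1 := by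
          rw [sub_eq_zero.mp h]
      _ = f W := (hP1 W).symm


/-- composition with `press`, as a linear map -/
def pressComp : (((Q').Rep (β' Q v₀ w b hw huniq β) → ℂ)) →ₗ[ℂ] (Q.Rep β → ℂ) where
  toFun := fun f => fun W => f (press Q v₀ w b hbt hbh hw huniq β W)
  map_add' := fun _ _ => rfl
  map_smul' := fun _ _ => rfl

/-- composition with `lift`, as a linear map -/
def liftComp : (Q.Rep β → ℂ) →ₗ[ℂ] (((Q').Rep (β' Q v₀ w b hw huniq β) → ℂ)) where
  toFun := fun f => fun X => f (lift Q v₀ w b hbt hbh hw huniq β hβ X)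
  map_add' := fun _ _ => rfl
  map_smul' := fun _ _ => rfl

include hbt hbh hw huniq hβ in
lemma main_equiv (σ : Q.V → ℤ) (hσ : σ v₀ = 0) :
    Nonempty ((Q.SIw β σ) ≃ₗ[ℂ]
      ((Q').SIw (fun x => β x.val) (fun x => σ x.val))) := by
  have hmemΨ : ∀ f : ↥(Q.SIw β σ),
      liftComp Q v₀ w b hbt hbh hw huniq β hβ f.1
        ∈ (Q').SIw (fun x => β x.val) (fun x => σ x.val) := by
    intro f
    have hf : Q.IsPolyFun f.1 ∧ (∀ (g : Q.GLb β) (W : Q.Rep β),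
        f.1 (Q.invAct g W) = Q.detWeight σ g * f.1 W) := f.2
    refine ⟨isPolyFun_comp _ (lift_entries Q v₀ w b hbt hbh hw huniq β hβ) hf.1,
      fun g' X => ?_⟩
    have h1 : (Q').invAct g' X
        = press Q v₀ w b hbt hbh hw huniq β
            (Q.invAct (extGL Q v₀ w b hw huniq β g')
              (lift Q v₀ w b hbt hbh hw huniq β hβ X)) := by
      rw [press_invAct Q v₀ w b hbt hbh hw huniq β, resGL_extGL,
        press_lift Q v₀ w b hbt hbh hw huniq β hβ]
    show f.1 (lift Q v₀ w b hbt hbh hw huniq β hβ ((Q').invAct g' X)) = _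
    rw [h1, f_liftpress Q v₀ w b hbt hbh hw huniq β hβ σ hσ hf.1 hf.2, hf.2,
      detWeight_extGL Q v₀ w b hw huniq β σ hσ]
    rfl
  have hmemΦ : ∀ f' : ↥((Q').SIw (fun x => β x.val) (fun x => σ x.val)),
      pressComp Q v₀ w b hbt hbh hw huniq β f'.1 ∈ Q.SIw β σ := by
    intro f'
    have hf' : (Q').IsPolyFun f'.1 ∧ (∀ (g' : (Q').GLb (fun x => β x.val))
        (X : (Q').Rep (fun x => β x.val)),
        f'.1 ((Q').invAct g' X) = (Q').detWeight (fun x => σ x.val) g' * f'.1 X) := f'.2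
    refine ⟨isPolyFun_comp _ (press_entries Q v₀ w b hbt hbh hw huniq β) hf'.1,
      fun g W => ?_⟩
    show f'.1 (press Q v₀ w b hbt hbh hw huniq β (Q.invAct g W)) = _
    rw [press_invAct Q v₀ w b hbt hbh hw huniq β, hf'.2,
      ← detWeight_resGL Q v₀ w b hw huniq β σ hσ]
    rfl
  refine ⟨LinearEquiv.ofLinear
    (LinearMap.codRestrict _ ((liftComp Q v₀ w b hbt hbh hw huniq β hβ).comp
      (Q.SIw β σ).subtype) hmemΨ)
    (LinearMap.codRestrict _ ((pressComp Q v₀ w b hbt hbh hw huniq β).comp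
      ((Q').SIw (fun x => β x.val) (fun x => σ x.val)).subtype) hmemΦ)
    ?_ ?_⟩
  · apply LinearMap.ext
    intro f'
    apply Subtype.ext
    funext X
    show f'.1 (press Q v₀ w b hbt hbh hw huniq β
      (lift Q v₀ w b hbt hbh hw huniq β hβ X)) = f'.1 X
    rw [press_lift Q v₀ w b hbt hbh hw huniq β hβ]
  · apply LinearMap.ext
    intro f
    apply Subtype.ext
    funext W
    have hf : Q.IsPolyFun f.1 ∧ (∀ (g : Q.GLb β) (W : Q.Rep β),
        f.1 (Q.invAct g W) = Q.detWeight σ g * f.1 W) := f.2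
    show f.1 (lift Q v₀ w b hbt hbh hw huniq β hβ
      (press Q v₀ w b hbt hbh hw huniq β W)) = f.1 W
    exact f_liftpress Q v₀ w b hbt hbh hw huniq β hβ σ hσ hf.1 hf.2 W

end Main
end SIRem

/-- removing a vertex of zero weight. If the arrows at `v₀` are exactly
the incoming arrows `a₁ : v₁ → v₀, …, a_ℓ : v_ℓ → v₀` together with one outgoing arrow
`b : v₀ → w`, and if `β(v₀) ≥ β(w)` and `σ(v₀) = 0`, then
`SI(Q,β)_σ ≅ SI(Q̄, β̄)_{σ̄}` as `ℂ`-vector spaces. -/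
theorem siw_remove_zero_weight_vertex
    (Q : FinQuiver) (hconn : Q.Connected) (hacyc : Q.Acyclic)
    (v₀ w : Q.V) (b : Q.A)
    (hbt : Q.t b = v₀) (hbh : Q.h b = w) (hw : w ≠ v₀)
    (huniq : ∀ c : Q.A, Q.t c = v₀ → c = b)
    (β : Q.V → ℕ) (σ : Q.V → ℤ)
    (hβ : β w ≤ β v₀) (hσ : σ v₀ = 0) :
    Nonempty ((Q.SIw β σ) ≃ₗ[ℂ]
      ((Q.removeVertex v₀ w b hw huniq).SIw
        (fun x => β x.val) (fun x => σ x.val))) := by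
  exact SIRem.main_equiv Q v₀ w b hbt hbh hw huniq β hβ σ hσ
end
end

section
/- With margin vectors a ∈ ℕ^m, b ∈ ℕ^n satisfying Σ a_i = Σ b_j, the number of 3-way contingency tables equals the dimension of the corresponding weight space of semi-invariants of the p-complete bipartite quiver: T_{a,b} = dim_ℂ SI(Q^p_{m,n}, 𝟏)_{θ_{a,b}}. -/
namespace CTproof
open MvPolynomial FinQuiver

variable {m n p : ℕ}

/-- Shorthand for the arrow set of `Qpmn`. -/
abbrev Arw (m n p : ℕ) := Fin m × Fin n × Fin p

/-- The representation space with all dimensions 1. -/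
abbrev Rp (m n p : ℕ) := (Qpmn m n p).Rep (fun _ => 1)

/-- The monomial function attached to a table `x`. -/
def mono (x : Arw m n p → ℕ) : Rp m n p → ℂ :=
  fun W => ∏ t : Arw m n p, (W t 0 0) ^ (x t)

/-- Build a representation from a scalar on each arrow. -/
def toW (v : Arw m n p → ℂ) : Rp m n p := fun t => Matrix.of fun _ _ => v t

lemma W_eq_toW (W : Rp m n p) : W = toW (fun t => W t 0 0) := by
  funext t
  ext i j
  have hi : i = 0 := Subsingleton.elim _ _
  have hj : j = 0 := Subsingleton.elim _ _
  subst hi; subst hj; rfl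

lemma mono_toW (x : Arw m n p → ℕ) (v : Arw m n p → ℂ) :
    mono x (toW v) = ∏ t : Arw m n p, (v t) ^ (x t) := rfl

lemma one_by_one_mul (A B : Matrix (Fin 1) (Fin 1) ℂ) : (A * B) 0 0 = A 0 0 * B 0 0 := by
  simp [Matrix.mul_apply]

lemma unit_entry_mul (u : (Matrix (Fin 1) (Fin 1) ℂ)ˣ) :
    u.val 0 0 * (u⁻¹).val 0 0 = 1 := by
  have h : (u.val * (u⁻¹).val) 0 0 = (1 : Matrix (Fin 1) (Fin 1) ℂ) 0 0 := by
    rw [u.mul_inv]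
  rw [one_by_one_mul] at h
  simpa using h

lemma unit_entry_ne (u : (Matrix (Fin 1) (Fin 1) ℂ)ˣ) : u.val 0 0 ≠ 0 := by
  intro h0
  have := unit_entry_mul u
  rw [h0, zero_mul] at this
  exact zero_ne_one this

lemma unit_inv_entry (u : (Matrix (Fin 1) (Fin 1) ℂ)ˣ) :
    (u⁻¹).val 0 0 = (u.val 0 0)⁻¹ := by
  exact eq_inv_of_mul_eq_one_right (unit_entry_mul u)

lemma prod_arw (F : Arw m n p → ℂ) :
    ∏ t : Arw m n p, F t = ∏ i : Fin m, ∏ j : Fin n, ∏ k : Fin p, F (i, j, k) := by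
  rw [Fintype.prod_prod_type]
  exact Finset.prod_congr rfl fun i _ => Fintype.prod_prod_type _

lemma prod_triple_fst (f : Fin m → ℂ) (x : Arw m n p → ℕ) :
    ∏ t : Arw m n p, f t.1 ^ x t = ∏ i : Fin m, f i ^ (∑ j : Fin n, ∑ k : Fin p, x (i, j, k)) := by
  rw [prod_arw (fun t => f t.1 ^ x t)]
  show (∏ i : Fin m, ∏ j : Fin n, ∏ k : Fin p, f i ^ x (i, j, k)) = _
  simp only [Finset.prod_pow_eq_pow_sum]

lemma prod_triple_snd (f : Fin n → ℂ) (x : Arw m n p → ℕ) :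
    ∏ t : Arw m n p, f t.2.1 ^ x t = ∏ j : Fin n, f j ^ (∑ i : Fin m, ∑ k : Fin p, x (i, j, k)) := by
  rw [prod_arw (fun t => f t.2.1 ^ x t)]
  show (∏ i : Fin m, ∏ j : Fin n, ∏ k : Fin p, f j ^ x (i, j, k)) = _
  rw [Finset.prod_comm]
  simp only [Finset.prod_pow_eq_pow_sum]

lemma mono_isPoly (x : Arw m n p → ℕ) : (Qpmn m n p).IsPolyFun (β := fun _ => 1) (mono x) := by
  refine ⟨∏ t : Arw m n p, (X (⟨t, (0, 0)⟩ :
    (a : (Qpmn m n p).A) × (Fin 1 × Fin 1))) ^ (x t), fun W => ?_⟩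
  rw [map_prod]
  refine Finset.prod_congr rfl fun t _ => ?_
  rw [map_pow, eval_X]

variable {a : Fin m → ℕ} {b : Fin n → ℕ}

lemma detWeight_eq (g : (Qpmn m n p).GLb (fun _ => 1)) :
    (Qpmn m n p).detWeight (thetaAB a b) g
      = (∏ i : Fin m, ((g (Sum.inl i)).val 0 0) ^ (a i))
        * ∏ j : Fin n, (((g (Sum.inr j)).val 0 0)⁻¹) ^ (b j) := by
  unfold FinQuiver.detWeight
  show (∏ v : Fin m ⊕ Fin n, ((g v).val).det ^ thetaAB a b v) = _
  rw [Fintype.prod_sum_type]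
  congr 1
  · refine Finset.prod_congr rfl fun i _ => ?_
    rw [show (g (Sum.inl i)).val.det = (g (Sum.inl i)).val 0 0 from Matrix.det_fin_one _]
    simp [thetaAB, zpow_natCast]
  · refine Finset.prod_congr rfl fun j _ => ?_
    rw [show (g (Sum.inr j)).val.det = (g (Sum.inr j)).val 0 0 from Matrix.det_fin_one _]
    simp [thetaAB, zpow_neg, zpow_natCast, inv_pow]

lemma invAct_entry (g : (Qpmn m n p).GLb (fun _ => 1)) (W : Rp m n p) (t : Arw m n p) :
    (Qpmn m n p).invAct g W t 0 0
      = ((g (Sum.inr t.2.1)).val 0 0)⁻¹ * W t 0 0 * (g (Sum.inl t.1)).val 0 0 := by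
  show (((g (Sum.inr t.2.1))⁻¹).val * W t * (g (Sum.inl t.1)).val) 0 0 = _
  rw [one_by_one_mul, one_by_one_mul, unit_inv_entry]

lemma mono_semiinv (x : Arw m n p → ℕ)
    (hxa : ∀ i : Fin m, ∑ j : Fin n, ∑ k : Fin p, x (i, j, k) = a i)
    (hxb : ∀ j : Fin n, ∑ i : Fin m, ∑ k : Fin p, x (i, j, k) = b j)
    (g : (Qpmn m n p).GLb (fun _ => 1)) (W : Rp m n p) :
    mono x ((Qpmn m n p).invAct g W)
      = (Qpmn m n p).detWeight (thetaAB a b) g * mono x W := by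
  unfold mono
  have h1 : ∀ t : Arw m n p, ((Qpmn m n p).invAct g W t 0 0) ^ (x t)
      = (((g (Sum.inr t.2.1)).val 0 0)⁻¹) ^ (x t) * ((g (Sum.inl t.1)).val 0 0) ^ (x t)
         * (W t 0 0) ^ (x t) := by
    intro t
    rw [invAct_entry]
    ring
  rw [Finset.prod_congr rfl fun t _ => h1 t]
  rw [Finset.prod_mul_distrib, Finset.prod_mul_distrib]
  rw [prod_triple_snd (fun j => ((g (Sum.inr j)).val 0 0)⁻¹) x,
      prod_triple_fst (fun i => (g (Sum.inl i)).val 0 0) x]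
  simp only [hxa, hxb]
  rw [detWeight_eq]
  ring

lemma mono_mem (x : Arw m n p → ℕ)
    (hxa : ∀ i : Fin m, ∑ j : Fin n, ∑ k : Fin p, x (i, j, k) = a i)
    (hxb : ∀ j : Fin n, ∑ i : Fin m, ∑ k : Fin p, x (i, j, k) = b j) :
    mono x ∈ (Qpmn m n p).SIw (fun _ => 1) (thetaAB a b) :=
  ⟨mono_isPoly x, fun g W => mono_semiinv x hxa hxb g W⟩

/-- The unit `1×1` matrix with entry a given unit scalar. -/
def sUnit (z : ℂˣ) : (Matrix (Fin 1) (Fin 1) ℂ)ˣ where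
  val := Matrix.of fun _ _ => (z : ℂ)
  inv := Matrix.of fun _ _ => ((z⁻¹ : ℂˣ) : ℂ)
  val_inv := by
    ext i j
    have hi : i = 0 := Subsingleton.elim _ _
    have hj : j = 0 := Subsingleton.elim _ _
    subst hi; subst hj
    simp [Matrix.mul_apply, Matrix.one_apply]
  inv_val := by
    ext i j
    have hi : i = 0 := Subsingleton.elim _ _
    have hj : j = 0 := Subsingleton.elim _ _
    subst hi; subst hj
    simp [Matrix.mul_apply, Matrix.one_apply]

/-- Diagonal torus element of `GL(𝟏)`. -/
def GG (c : Fin m ⊕ Fin n → ℂˣ) : (Qpmn m n p).GLb (fun _ => 1) := fun v => sUnit (c v)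

lemma GG_val (c : Fin m ⊕ Fin n → ℂˣ) (v : Fin m ⊕ Fin n) :
    ((GG (m := m) (n := n) (p := p) c) v).val 0 0 = (c v : ℂ) := rfl

lemma GG_inv_val (c : Fin m ⊕ Fin n → ℂˣ) (v : Fin m ⊕ Fin n) :
    (((GG (m := m) (n := n) (p := p) c) v)⁻¹).val 0 0 = ((c v)⁻¹ : ℂˣ) := rfl

/-- The scaling function on arrows induced by a torus element. -/
def sFun (c : Fin m ⊕ Fin n → ℂˣ) : Arw m n p → ℂ :=
  fun t => (((c (Sum.inr t.2.1))⁻¹ : ℂˣ) : ℂ) * ((c (Sum.inl t.1) : ℂ))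

lemma invAct_GG_toW (c : Fin m ⊕ Fin n → ℂˣ) (v : Arw m n p → ℂ) :
    (Qpmn m n p).invAct (GG c) (toW v)
      = toW (fun t => sFun c t * v t) := by
  funext t
  ext i j
  have hi : i = 0 := Subsingleton.elim _ _
  have hj : j = 0 := Subsingleton.elim _ _
  subst hi; subst hj
  show ((((GG c) (Sum.inr t.2.1))⁻¹).val * toW v t * ((GG c) (Sum.inl t.1)).val) 0 0 = _
  rw [one_by_one_mul, one_by_one_mul, GG_inv_val, GG_val]
  show _ = sFun c t * v t
  rw [show toW v t 0 0 = v t from rfl]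
  unfold sFun
  ring

lemma detWeight_GG {a : Fin m → ℕ} {b : Fin n → ℕ} (c : Fin m ⊕ Fin n → ℂˣ) :
    (Qpmn m n p).detWeight (thetaAB a b) (GG c)
      = (∏ i : Fin m, ((c (Sum.inl i) : ℂ)) ^ (a i))
        * ∏ j : Fin n, (((c (Sum.inr j) : ℂ))⁻¹) ^ (b j) := by
  rw [detWeight_eq]
  rfl

lemma coeff_of_scale {σ : Type} [Fintype σ] [DecidableEq σ] (s : σ → ℂ) (e : ℂ)
    (P : MvPolynomial σ ℂ)
    (h : ∀ v : σ → ℂ, eval (fun t => s t * v t) P = e * eval v P) (d : σ →₀ ℕ) :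
    (∏ t : σ, s t ^ d t) * coeff d P = e * coeff d P := by
  set Q2 : MvPolynomial σ ℂ :=
    ∑ d' ∈ P.support, monomial d' (coeff d' P * ∏ t : σ, s t ^ d' t) with hQ2
  have heval : ∀ v : σ → ℂ, eval v Q2 = eval (fun t => s t * v t) P := by
    intro v
    rw [hQ2, map_sum, eval_eq' (fun t => s t * v t) P]
    refine Finset.sum_congr rfl fun d' _ => ?_
    rw [eval_monomial, Finsupp.prod_fintype _ _ (fun i => pow_zero (v i))]
    simp only [mul_pow, Finset.prod_mul_distrib]
    ring
  have hQ2P : Q2 = C e * P := by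
    apply MvPolynomial.funext
    intro v
    rw [heval v, h v, map_mul, eval_C]
  have hc := congrArg (coeff d) hQ2P
  rw [coeff_C_mul, hQ2, MvPolynomial.coeff_sum] at hc
  simp only [coeff_monomial] at hc
  rw [Finset.sum_ite_eq' P.support d (fun d' => coeff d' P * ∏ t : σ, s t ^ d' t)] at hc
  by_cases hd : d ∈ P.support
  · rw [if_pos hd] at hc
    rw [mul_comm]
    exact hc
  · rw [MvPolynomial.notMem_support_iff.mp hd]
    ring

lemma pow_two_inj {E F : ℕ} (h : (2 : ℂ) ^ E = (2 : ℂ) ^ F) : E = F := by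
  have h2 : ((2 ^ E : ℕ) : ℂ) = ((2 ^ F : ℕ) : ℂ) := by push_cast; exact h
  exact Nat.pow_right_injective le_rfl (Nat.cast_injective h2)

variable {a : Fin m → ℕ} {b : Fin n → ℕ}

lemma row_margin (P' : MvPolynomial (Arw m n p) ℂ)
    (hsc : ∀ (c : Fin m ⊕ Fin n → ℂˣ) (v : Arw m n p → ℂ),
      eval (fun t => sFun c t * v t) P'
        = (Qpmn m n p).detWeight (thetaAB a b) (GG c) * eval v P')
    (d : Arw m n p →₀ ℕ) (hd : coeff d P' ≠ 0) (i₀ : Fin m) :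
    ∑ j : Fin n, ∑ k : Fin p, d (i₀, j, k) = a i₀ := by
  set two : ℂˣ := Units.mk0 (2 : ℂ) two_ne_zero with htwo
  set c : Fin m ⊕ Fin n → ℂˣ := fun v => if v = Sum.inl i₀ then two else 1 with hc
  have hkey := coeff_of_scale (sFun c)
    ((Qpmn m n p).detWeight (thetaAB a b) (GG c)) P' (fun v => hsc c v) d
  have h1 : ∀ t : Arw m n p,
      sFun c t = (fun i => if i = i₀ then (2 : ℂ) else 1) t.1 := by
    intro t
    simp only [hc, sFun]
    rw [if_neg (by simp)]
    by_cases ht : t.1 = i₀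
    · rw [if_pos (by rw [ht])]
      simp [if_pos ht, htwo]
    · rw [if_neg (fun hcon => ht (Sum.inl.inj hcon))]
      simp [if_neg ht]
  have hprod : (∏ t : Arw m n p, sFun c t ^ d t)
        = (2 : ℂ) ^ (∑ j : Fin n, ∑ k : Fin p, d (i₀, j, k)) := by
    rw [Finset.prod_congr rfl fun t _ => by rw [h1 t]]
    rw [prod_triple_fst (fun i => if i = i₀ then (2 : ℂ) else 1) (fun t => d t)]
    rw [Finset.prod_eq_single i₀ (fun i _ hne => by rw [if_neg hne, one_pow])
      (fun hni => absurd (Finset.mem_univ i₀) hni), if_pos rfl]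
  have hdet : (Qpmn m n p).detWeight (thetaAB a b) (GG c) = (2 : ℂ) ^ (a i₀) := by
    rw [detWeight_GG]
    have e1 : ∏ i : Fin m, ((c (Sum.inl i) : ℂ)) ^ (a i) = (2 : ℂ) ^ (a i₀) := by
      rw [Finset.prod_eq_single i₀
        (fun i _ hne => by
          simp only [hc]
          rw [if_neg (fun hcon => hne (Sum.inl.inj hcon))]
          simp)
        (fun hni => absurd (Finset.mem_univ i₀) hni)]
      simp [hc, htwo]
    have e2 : ∏ j : Fin n, (((c (Sum.inr j) : ℂ))⁻¹) ^ (b j) = 1 := by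
      refine Finset.prod_eq_one fun j _ => ?_
      simp only [hc]
      rw [if_neg (by simp)]
      simp
    rw [e1, e2, mul_one]
  rw [hprod, hdet] at hkey
  exact pow_two_inj (mul_right_cancel₀ hd hkey)

lemma col_margin (P' : MvPolynomial (Arw m n p) ℂ)
    (hsc : ∀ (c : Fin m ⊕ Fin n → ℂˣ) (v : Arw m n p → ℂ),
      eval (fun t => sFun c t * v t) P'
        = (Qpmn m n p).detWeight (thetaAB a b) (GG c) * eval v P')
    (d : Arw m n p →₀ ℕ) (hd : coeff d P' ≠ 0) (j₀ : Fin n) :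
    ∑ i : Fin m, ∑ k : Fin p, d (i, j₀, k) = b j₀ := by
  set two : ℂˣ := Units.mk0 (2 : ℂ) two_ne_zero with htwo
  set c : Fin m ⊕ Fin n → ℂˣ := fun v => if v = Sum.inr j₀ then two else 1 with hc
  have hkey := coeff_of_scale (sFun c)
    ((Qpmn m n p).detWeight (thetaAB a b) (GG c)) P' (fun v => hsc c v) d
  have h1 : ∀ t : Arw m n p,
      sFun c t = (fun j => if j = j₀ then (2 : ℂ)⁻¹ else 1) t.2.1 := by
    intro t
    simp only [hc, sFun]
    rw [show (if Sum.inl t.1 = Sum.inr j₀ then two else 1) = 1 from if_neg (by simp)]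
    by_cases ht : t.2.1 = j₀
    · rw [if_pos (show Sum.inr t.2.1 = Sum.inr j₀ from by rw [ht])]
      simp [if_pos ht, htwo, Units.val_inv_eq_inv_val]
    · rw [if_neg (fun hcon => ht (Sum.inr.inj hcon))]
      simp [if_neg ht]
  have hprod : (∏ t : Arw m n p, sFun c t ^ d t)
        = ((2 : ℂ)⁻¹) ^ (∑ i : Fin m, ∑ k : Fin p, d (i, j₀, k)) := by
    rw [Finset.prod_congr rfl fun t _ => by rw [h1 t]]
    rw [prod_triple_snd (fun j => if j = j₀ then (2 : ℂ)⁻¹ else 1) (fun t => d t)]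
    rw [Finset.prod_eq_single j₀ (fun j _ hne => by rw [if_neg hne, one_pow])
      (fun hnj => absurd (Finset.mem_univ j₀) hnj), if_pos rfl]
  have hdet : (Qpmn m n p).detWeight (thetaAB a b) (GG c) = ((2 : ℂ)⁻¹) ^ (b j₀) := by
    rw [detWeight_GG]
    have e1 : ∏ i : Fin m, ((c (Sum.inl i) : ℂ)) ^ (a i) = 1 := by
      refine Finset.prod_eq_one fun i _ => ?_
      simp only [hc]
      rw [if_neg (by simp)]
      simp
    have e2 : ∏ j : Fin n, (((c (Sum.inr j) : ℂ))⁻¹) ^ (b j) = ((2 : ℂ)⁻¹) ^ (b j₀) := by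
      rw [Finset.prod_eq_single j₀
        (fun j _ hne => by
          simp only [hc]
          rw [if_neg (fun hcon => hne (Sum.inr.inj hcon))]
          simp)
        (fun hnj => absurd (Finset.mem_univ j₀) hnj)]
      simp [hc, htwo]
    rw [e1, e2, one_mul]
  rw [hprod, hdet] at hkey
  have h2 := mul_right_cancel₀ hd hkey
  rw [inv_pow, inv_pow] at h2
  exact pow_two_inj (inv_injective h2)

/-- The set of contingency tables with margins `a`, `b`. -/
abbrev Tab (m n p : ℕ) (a : Fin m → ℕ) (b : Fin n → ℕ) :=
  {x : Fin m × Fin n × Fin p → ℕ //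
    (∀ i : Fin m, ∑ j : Fin n, ∑ k : Fin p, x (i, j, k) = a i) ∧
    (∀ j : Fin n, ∑ i : Fin m, ∑ k : Fin p, x (i, j, k) = b j)}

/-- The monomial family, as elements of the semi-invariant space. -/
noncomputable def bS (m n p : ℕ) (a : Fin m → ℕ) (b : Fin n → ℕ) :
    Tab m n p a b → ((Qpmn m n p).SIw (fun _ => 1) (thetaAB a b)) :=
  fun x => ⟨mono x.1, mono_mem x.1 x.2.1 x.2.2⟩

lemma mono_li : LinearIndependent ℂ (fun x : Tab m n p a b => mono (m := m) (n := n) (p := p) x.1) := by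
  classical
  rw [linearIndependent_iff']
  intro sf gc hsum x hx
  set D : (Arw m n p → ℕ) → ((Arw m n p) →₀ ℕ) :=
    fun y => Finsupp.equivFunOnFinite.symm y with hD
  set Pol : MvPolynomial (Arw m n p) ℂ :=
    ∑ i ∈ sf, C (gc i) * monomial (D i.1) 1 with hPol
  have hterm : ∀ (y : Arw m n p → ℕ) (g : ℂ) (v : Arw m n p → ℂ),
      eval v (C g * monomial (D y) 1) = g * mono y (toW v) := by
    intro y g v
    rw [map_mul, eval_C, eval_monomial,
      Finsupp.prod_fintype _ _ (fun i => pow_zero (v i)), mono_toW]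
    simp [hD]
  have hev : ∀ v : Arw m n p → ℂ, eval v Pol = 0 := by
    intro v
    have h0 := congrFun hsum (toW v)
    simp only [Finset.sum_apply, Pi.smul_apply, smul_eq_mul, Pi.zero_apply] at h0
    rw [hPol, map_sum, Finset.sum_congr rfl fun i _ => hterm i.1 (gc i) v]
    exact h0
  have hPol0 : Pol = 0 := MvPolynomial.funext fun v => by rw [hev v]; simp
  have hcoeff := congrArg (coeff (D x.1)) hPol0
  rw [hPol, MvPolynomial.coeff_sum] at hcoeff
  simp only [coeff_C_mul, coeff_monomial, map_zero] at hcoeff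
  rw [Finset.sum_eq_single x (fun i _ hne => by
      rw [if_neg (fun hcon => hne (Subtype.ext (Finsupp.equivFunOnFinite.symm.injective hcon))),
        mul_zero])
    (fun hnx => absurd hx hnx)] at hcoeff
  rw [if_pos rfl, mul_one] at hcoeff
  exact hcoeff

lemma bS_li : LinearIndependent ℂ (bS m n p a b) :=
  LinearIndependent.of_comp ((Qpmn m n p).SIw (fun _ => 1) (thetaAB a b)).subtype
    (by exact mono_li)

lemma bS_span :
    ⊤ ≤ Submodule.span ℂ (Set.range (bS m n p a b)) := by
  classical
  rintro F -
  obtain ⟨⟨P, hP⟩, hinv⟩ := F.2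
  set P' : MvPolynomial (Arw m n p) ℂ := rename Sigma.fst P with hP'
  have hfv : ∀ v : Arw m n p → ℂ, F.1 (toW v) = eval v P' := by
    intro v
    rw [hP (toW v), hP']
    exact (eval_rename _ _ _).symm
  have hsc : ∀ (c : Fin m ⊕ Fin n → ℂˣ) (v : Arw m n p → ℂ),
      eval (fun t => sFun c t * v t) P'
        = (Qpmn m n p).detWeight (thetaAB a b) (GG c) * eval v P' := by
    intro c v
    rw [← hfv, ← hfv, ← invAct_GG_toW]
    exact hinv (GG c) (toW v)
  have hmarg : ∀ d ∈ P'.support,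
      (∀ i : Fin m, ∑ j : Fin n, ∑ k : Fin p, d (i, j, k) = a i) ∧
      (∀ j : Fin n, ∑ i : Fin m, ∑ k : Fin p, d (i, j, k) = b j) := by
    intro d hd
    have hd' : coeff d P' ≠ 0 := MvPolynomial.mem_support_iff.mp hd
    exact ⟨row_margin P' hsc d hd', col_margin P' hsc d hd'⟩
  have hrep : F.1 = ∑ d ∈ P'.support, coeff d P' • mono (fun t => d t) := by
    funext W
    have hW : F.1 W = eval (fun t => W t 0 0) P' := by
      conv_lhs => rw [W_eq_toW W]
      exact hfv _
    rw [hW]; refine (eval_eq' _ _).trans ?_; rw [Finset.sum_apply]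
    refine Finset.sum_congr rfl fun d _ => ?_
    simp only [Pi.smul_apply, smul_eq_mul, mono]
    rfl
  have hFsum : F = ∑ d ∈ P'.support.attach,
      coeff d.1 P' • bS m n p a b ⟨fun t => d.1 t, (hmarg d.1 d.2).1, (hmarg d.1 d.2).2⟩ := by
    apply Subtype.ext
    rw [hrep]
    push_cast [AddSubmonoidClass.coe_finset_sum, SetLike.val_smul]
    rw [← Finset.sum_attach P'.support (fun d => coeff d P' • mono (fun t => d t))]
    rfl
  rw [hFsum]
  exact Submodule.sum_mem _ fun d _ =>
    Submodule.smul_mem _ _ (Submodule.subset_span (Set.mem_range_self _))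

/-- The monomial basis of the weight space of semi-invariants. -/
noncomputable def tabBasis (m n p : ℕ) (a : Fin m → ℕ) (b : Fin n → ℕ) :
    Module.Basis (Tab m n p a b) ℂ ((Qpmn m n p).SIw (fun _ => 1) (thetaAB a b)) :=
  Module.Basis.mk bS_li bS_span

end CTproof

/-- The number of `m × n × p` contingency tables with plane-sum margins
`a` and `b` equals the dimension of `SI(Q^p_{m,n}, 𝟏)_{θ_{a,b}}`. -/
theorem numTables_eq_siDim_Qpmn
    (m n p : ℕ) (hm : 0 < m) (hn : 0 < n) (hp : 0 < p)
    (a : Fin m → ℕ) (b : Fin n → ℕ)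
    (hab : ∑ i : Fin m, a i = ∑ j : Fin n, b j) :
    numTables m n p a b = (Qpmn m n p).siDim (fun _ => 1) (thetaAB a b) := by
  have := Module.finrank_eq_nat_card_basis (CTproof.tabBasis m n p a b)
  unfold FinQuiver.siDim
  rw [this]
  rfl
end
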